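/- arXiv:1210.1757 — 5 statements merged into one kernel-verified Lean document; each statement's English description precedes it below -/
import Mathlib

section
/- For every real v > 1/2 and every tie-breaking rule, if (μ, ν) is a mixed Nash equilibrium of the AND–OR game then the expected utility of the OR player is strictly positive: U_or(μ, ν) > 0. -/
open MeasureTheory Set
open scoped ENNReal

set_option maxHeartbeats 1000000
noncomputable section

/-- A bid profile for one player: a bid on each of the two items. -/
abbrev Bid := ℝ × ℝ

/-- The maximum allowed bid `H = max 1 v`. -/
def Hval (v : ℝ) : ℝ := max 1 v

/-- The set of allowed bids `[0,H] × [0,H]`. -/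
def box (v : ℝ) : Set Bid := Icc (0:ℝ) (Hval v) ×ˢ Icc (0:ℝ) (Hval v)

/-- A tie-breaking rule: measurable functions `t₁ t₂ : ℝ → [0,1]`, where `tᵢ x` is the
probability that AND wins item `i` when both players bid `x` on it. -/
structure TieRule where
  t1 : ℝ → ℝ
  t2 : ℝ → ℝ
  meas1 : Measurable t1
  meas2 : Measurable t2
  t1_nonneg : ∀ x, 0 ≤ t1 x
  t1_le_one : ∀ x, t1 x ≤ 1
  t2_nonneg : ∀ x, 0 ≤ t2 x
  t2_le_one : ∀ x, t2 x ≤ 1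

/-- Probability that AND wins item 1 with bids `a` (AND) and `b` (OR). -/
def q1 (T : TieRule) (a b : Bid) : ℝ :=
  if b.1 < a.1 then 1 else if a.1 = b.1 then T.t1 a.1 else 0

/-- Probability that AND wins item 2 with bids `a` (AND) and `b` (OR). -/
def q2 (T : TieRule) (a b : Bid) : ℝ :=
  if b.2 < a.2 then 1 else if a.2 = b.2 then T.t2 a.2 else 0

/-- Expected utility of the AND player at the pure profile `(a,b)`. -/
def uAnd (T : TieRule) (a b : Bid) : ℝ :=
  q1 T a b * q2 T a b - a.1 * q1 T a b - a.2 * q2 T a b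

/-- Expected utility of the OR player at the pure profile `(a,b)`. -/
def uOr (v : ℝ) (T : TieRule) (a b : Bid) : ℝ :=
  v * (1 - q1 T a b * q2 T a b) - b.1 * (1 - q1 T a b) - b.2 * (1 - q2 T a b)

/-- A mixed strategy: a Borel probability measure on `ℝ × ℝ` supported in the box. -/
def IsMixed (v : ℝ) (μ : Measure Bid) : Prop :=
  IsProbabilityMeasure μ ∧ μ (box v) = 1

/-- Expected utility of AND under mixed strategies. -/
def UAnd (T : TieRule) (μ ν : Measure Bid) : ℝ :=
  ∫ p, uAnd T p.1 p.2 ∂(μ.prod ν)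

/-- Expected utility of OR under mixed strategies. -/
def UOr (v : ℝ) (T : TieRule) (μ ν : Measure Bid) : ℝ :=
  ∫ p, uOr v T p.1 p.2 ∂(μ.prod ν)

/-- `(μ,ν)` is a mixed Nash equilibrium of the AND–OR game. -/
def IsNash (v : ℝ) (T : TieRule) (μ ν : Measure Bid) : Prop :=
  IsMixed v μ ∧ IsMixed v ν ∧
  (∀ a ∈ box v, (∫ b, uAnd T a b ∂ν) ≤ UAnd T μ ν) ∧
  (∀ b ∈ box v, (∫ a, uOr v T a b ∂μ) ≤ UOr v T μ ν)

/-- The uniform probability measure on `[0,1] ⊆ ℝ`. -/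
def P01 : Measure ℝ := volume.restrict (Icc (0:ℝ) 1)

/-- The OR equilibrium strategy `ν*`: bid `(x,0)` or `(0,x)` with probability `1/2` each,
where `x ∈ [0,1/2]` has CDF `x/(1-x)`. -/
def nuStar : Measure Bid :=
  (1/2 : ℝ≥0∞) • Measure.map (fun u => (u/(1+u), (0:ℝ))) P01 +
  (1/2 : ℝ≥0∞) • Measure.map (fun u => ((0:ℝ), u/(1+u))) P01

/-- Inverse-CDF map for the AND equilibrium bid distribution. -/
def gAnd (v u : ℝ) : ℝ := if 0 < u then max 0 (v - (v - 1/2)/u) else 0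

/-- The AND equilibrium strategy `μ*`: bid `(y,y)` where `y ∈ [0,1/2]` has CDF
`(v-1/2)/(v-y)`, with an atom of mass `1 - 1/(2v)` at `0`. -/
def muStar (v : ℝ) : Measure Bid := Measure.map (fun u => (gAnd v u, gAnd v u)) P01
/-! ### Auxiliary lemmas -/

lemma q1_bounds (T : TieRule) (a b : Bid) : 0 ≤ q1 T a b ∧ q1 T a b ≤ 1 := by
  unfold q1; split_ifs with h1 h2
  · exact ⟨zero_le_one, le_refl 1⟩
  · exact ⟨T.t1_nonneg _, T.t1_le_one _⟩
  · exact ⟨le_refl 0, zero_le_one⟩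

lemma q2_bounds (T : TieRule) (a b : Bid) : 0 ≤ q2 T a b ∧ q2 T a b ≤ 1 := by
  unfold q2; split_ifs with h1 h2
  · exact ⟨zero_le_one, le_refl 1⟩
  · exact ⟨T.t2_nonneg _, T.t2_le_one _⟩
  · exact ⟨le_refl 0, zero_le_one⟩

lemma measQ1 (T : TieRule) : Measurable (fun p : Bid × Bid => q1 T p.1 p.2) := by
  unfold q1
  exact Measurable.ite (measurableSet_lt (measurable_snd.fst) (measurable_fst.fst))
    measurable_const
    (Measurable.ite (measurableSet_eq_fun (measurable_fst.fst) (measurable_snd.fst))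
      (T.meas1.comp (measurable_fst.fst)) measurable_const)

lemma measQ2 (T : TieRule) : Measurable (fun p : Bid × Bid => q2 T p.1 p.2) := by
  unfold q2
  exact Measurable.ite (measurableSet_lt (measurable_snd.snd) (measurable_fst.snd))
    measurable_const
    (Measurable.ite (measurableSet_eq_fun (measurable_fst.snd) (measurable_snd.snd))
      (T.meas2.comp (measurable_fst.snd)) measurable_const)

lemma measUAnd (T : TieRule) : Measurable (fun p : Bid × Bid => uAnd T p.1 p.2) := by
  unfold uAnd
  exact (((measQ1 T).mul (measQ2 T)).sub ((measurable_fst.fst).mul (measQ1 T))).sub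
    ((measurable_fst.snd).mul (measQ2 T))

lemma measUOr (v : ℝ) (T : TieRule) : Measurable (fun p : Bid × Bid => uOr v T p.1 p.2) := by
  unfold uOr
  exact ((measurable_const.mul (measurable_const.sub ((measQ1 T).mul (measQ2 T)))).sub
    ((measurable_snd.fst).mul (measurable_const.sub (measQ1 T)))).sub
    ((measurable_snd.snd).mul (measurable_const.sub (measQ2 T)))

lemma integrable_of_bound {α : Type*} [MeasurableSpace α] (μ : Measure α) [IsFiniteMeasure μ]
    {f : α → ℝ} (hf : Measurable f) (C : ℝ) (h : ∀ᵐ x ∂μ, |f x| ≤ C) : Integrable f μ :=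
  (integrable_const C).mono' hf.aestronglyMeasurable (by simpa [Real.norm_eq_abs] using h)

lemma measurableSet_box (v : ℝ) : MeasurableSet (box v) :=
  (measurableSet_Icc).prod (measurableSet_Icc)

lemma ae_fst_prod {s : Set Bid} (hs : MeasurableSet s) (μ ν : Measure Bid)
    [IsProbabilityMeasure μ] [IsProbabilityMeasure ν] (h : μ sᶜ = 0) :
    ∀ᵐ p ∂(μ.prod ν), p.1 ∈ s := by
  rw [ae_iff]
  have he : {p : Bid × Bid | ¬ p.1 ∈ s} = Prod.fst ⁻¹' sᶜ := rfl
  rw [he, ← Measure.map_apply measurable_fst hs.compl, Measure.map_fst_prod]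
  simp [h]

lemma ae_snd_prod {s : Set Bid} (hs : MeasurableSet s) (μ ν : Measure Bid)
    [IsProbabilityMeasure μ] [IsProbabilityMeasure ν] (h : ν sᶜ = 0) :
    ∀ᵐ p ∂(μ.prod ν), p.2 ∈ s := by
  rw [ae_iff]
  have he : {p : Bid × Bid | ¬ p.2 ∈ s} = Prod.snd ⁻¹' sᶜ := rfl
  rw [he, ← Measure.map_apply measurable_snd hs.compl, Measure.map_snd_prod]
  simp [h]

lemma abs_uOr_le (v : ℝ) (hv : 0 ≤ v) (T : TieRule) (a b : Bid)
    (h1 : 0 ≤ b.1) (h2 : b.1 ≤ Hval v) (h3 : 0 ≤ b.2) (h4 : b.2 ≤ Hval v) :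
    |uOr v T a b| ≤ v + 2 * Hval v := by
  obtain ⟨hq10, hq11⟩ := q1_bounds T a b
  obtain ⟨hq20, hq21⟩ := q2_bounds T a b
  have key : uOr v T a b
      = v * (1 - q1 T a b * q2 T a b) - b.1 * (1 - q1 T a b) - b.2 * (1 - q2 T a b) := rfl
  have hq12 : 0 ≤ q1 T a b * q2 T a b := mul_nonneg hq10 hq20
  have hq12' : q1 T a b * q2 T a b ≤ 1 := by nlinarith
  have e1a : 0 ≤ v * (1 - q1 T a b * q2 T a b) := mul_nonneg hv (by linarith)
  have e1b : v * (1 - q1 T a b * q2 T a b) ≤ v := by nlinarith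
  have e2a : 0 ≤ b.1 * (1 - q1 T a b) := mul_nonneg h1 (by linarith)
  have e2b : b.1 * (1 - q1 T a b) ≤ Hval v := by nlinarith [mul_nonneg h1 hq10]
  have e3a : 0 ≤ b.2 * (1 - q2 T a b) := mul_nonneg h3 (by linarith)
  have e3b : b.2 * (1 - q2 T a b) ≤ Hval v := by nlinarith [mul_nonneg h3 hq20]
  rw [key, abs_le]
  constructor <;> linarith

lemma abs_uAnd_le (v : ℝ) (T : TieRule) (a b : Bid)
    (h1 : 0 ≤ a.1) (h2 : a.1 ≤ Hval v) (h3 : 0 ≤ a.2) (h4 : a.2 ≤ Hval v) :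
    |uAnd T a b| ≤ 1 + 2 * Hval v := by
  obtain ⟨hq10, hq11⟩ := q1_bounds T a b
  obtain ⟨hq20, hq21⟩ := q2_bounds T a b
  have key : uAnd T a b
      = q1 T a b * q2 T a b - a.1 * q1 T a b - a.2 * q2 T a b := rfl
  have hq12 : 0 ≤ q1 T a b * q2 T a b := mul_nonneg hq10 hq20
  have hq12' : q1 T a b * q2 T a b ≤ 1 := by nlinarith
  have e2a : 0 ≤ a.1 * q1 T a b := mul_nonneg h1 hq10
  have e2b : a.1 * q1 T a b ≤ Hval v := by nlinarith [mul_nonneg h1 (sub_nonneg.mpr hq11)]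
  have e3a : 0 ≤ a.2 * q2 T a b := mul_nonneg h3 hq20
  have e3b : a.2 * q2 T a b ≤ Hval v := by nlinarith [mul_nonneg h3 (sub_nonneg.mpr hq21)]
  rw [key, abs_le]
  constructor <;> linarith

/-- In any mixed Nash equilibrium `(μ,ν)` with `v > 1/2`, the expected
utility of the OR player is strictly positive. -/
theorem or_positive_utility (v : ℝ) (hv : 1/2 < v) (T : TieRule)
    (μ ν : Measure Bid) (h : IsNash v T μ ν) :
    0 < UOr v T μ ν := by
  obtain ⟨⟨hμp, hμbox⟩, ⟨hνp, hνbox⟩, hA, hO⟩ := h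
  haveI := hμp; haveI := hνp
  have hv0 : (0:ℝ) < v := by linarith
  have hH1 : (1:ℝ) ≤ Hval v := le_max_left _ _
  have hHv : v ≤ Hval v := le_max_right _ _
  have hH0 : (0:ℝ) ≤ Hval v := by linarith
  have hμc : μ (box v)ᶜ = 0 := by
    rw [measure_compl (measurableSet_box v) (measure_ne_top _ _), hμbox, measure_univ, tsub_self]
  have hνc : ν (box v)ᶜ = 0 := by
    rw [measure_compl (measurableSet_box v) (measure_ne_top _ _), hνbox, measure_univ, tsub_self]
  -- OR can guarantee 0 by bidding (0,0)
  have hUOr0 : 0 ≤ UOr v T μ ν := by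
    have hb : ((0:ℝ),(0:ℝ)) ∈ box v := ⟨⟨le_refl _, hH0⟩, ⟨le_refl _, hH0⟩⟩
    refine le_trans ?_ (hO _ hb)
    apply integral_nonneg
    intro a
    show (0:ℝ) ≤ uOr v T a ((0:ℝ),(0:ℝ))
    obtain ⟨hq10, hq11⟩ := q1_bounds T a ((0:ℝ),(0:ℝ))
    obtain ⟨hq20, hq21⟩ := q2_bounds T a ((0:ℝ),(0:ℝ))
    have key : uOr v T a ((0:ℝ),(0:ℝ))
        = v * (1 - q1 T a ((0:ℝ),(0:ℝ)) * q2 T a ((0:ℝ),(0:ℝ)))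
          - 0 * (1 - q1 T a ((0:ℝ),(0:ℝ))) - 0 * (1 - q2 T a ((0:ℝ),(0:ℝ))) := rfl
    have hq12' : q1 T a ((0:ℝ),(0:ℝ)) * q2 T a ((0:ℝ),(0:ℝ)) ≤ 1 := by nlinarith
    rw [key]
    nlinarith [mul_nonneg hv0.le (sub_nonneg.mpr hq12')]
  by_cases hS : μ {a : Bid | a.1 < v ∨ a.2 < v} = 0
  · -- Case 2: AND almost surely bids at least v on both items; derive a contradiction
    exfalso
    have hgood : MeasurableSet {a : Bid | v ≤ a.1 ∧ v ≤ a.2} :=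
      (measurableSet_le measurable_const measurable_fst).inter
        (measurableSet_le measurable_const measurable_snd)
    have hcompl : {a : Bid | v ≤ a.1 ∧ v ≤ a.2}ᶜ = {a : Bid | a.1 < v ∨ a.2 < v} := by
      ext a; simp only [mem_compl_iff, mem_setOf_eq, not_and_or, not_le]
    have haeA : ∀ᵐ p ∂(μ.prod ν), v ≤ p.1.1 ∧ v ≤ p.1.2 := by
      have := ae_fst_prod hgood μ ν (by rw [hcompl]; exact hS)
      exact this
    -- integrability facts on the product
    have hQ1i : Integrable (fun p : Bid × Bid => q1 T p.1 p.2) (μ.prod ν) := by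
      refine integrable_of_bound _ (measQ1 T) 1 ?_
      filter_upwards with p
      obtain ⟨h0, h1⟩ := q1_bounds T p.1 p.2
      rw [abs_le]; constructor <;> linarith
    have hQ2i : Integrable (fun p : Bid × Bid => q2 T p.1 p.2) (μ.prod ν) := by
      refine integrable_of_bound _ (measQ2 T) 1 ?_
      filter_upwards with p
      obtain ⟨h0, h1⟩ := q2_bounds T p.1 p.2
      rw [abs_le]; constructor <;> linarith
    have hQ12i : Integrable (fun p : Bid × Bid => q1 T p.1 p.2 * q2 T p.1 p.2) (μ.prod ν) := by
      refine integrable_of_bound _ ((measQ1 T).mul (measQ2 T)) 1 ?_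
      filter_upwards with p
      obtain ⟨h0, h1⟩ := q1_bounds T p.1 p.2
      obtain ⟨h2, h3⟩ := q2_bounds T p.1 p.2
      rw [abs_le]; constructor <;> nlinarith
    have hUAndi : Integrable (fun p : Bid × Bid => uAnd T p.1 p.2) (μ.prod ν) := by
      refine integrable_of_bound _ (measUAnd T) (1 + 2 * Hval v) ?_
      filter_upwards [ae_fst_prod (measurableSet_box v) μ ν hμc] with p hp
      obtain ⟨⟨ha0, ha1⟩, ⟨ha2, ha3⟩⟩ := hp
      exact abs_uAnd_le v T p.1 p.2 ha0 ha1 ha2 ha3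
    have hUOri : Integrable (fun p : Bid × Bid => uOr v T p.1 p.2) (μ.prod ν) := by
      refine integrable_of_bound _ (measUOr v T) (v + 2 * Hval v) ?_
      filter_upwards [ae_snd_prod (measurableSet_box v) μ ν hνc] with p hp
      obtain ⟨⟨hb0, hb1⟩, ⟨hb2, hb3⟩⟩ := hp
      exact abs_uOr_le v hv0.le T p.1 p.2 hb0 hb1 hb2 hb3
    -- AND can guarantee 0 by bidding (0,0)
    have hUAnd0 : 0 ≤ UAnd T μ ν := by
      have ha : ((0:ℝ),(0:ℝ)) ∈ box v := ⟨⟨le_refl _, hH0⟩, ⟨le_refl _, hH0⟩⟩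
      refine le_trans ?_ (hA _ ha)
      apply integral_nonneg
      intro b
      show (0:ℝ) ≤ uAnd T ((0:ℝ),(0:ℝ)) b
      obtain ⟨hq10, hq11⟩ := q1_bounds T ((0:ℝ),(0:ℝ)) b
      obtain ⟨hq20, hq21⟩ := q2_bounds T ((0:ℝ),(0:ℝ)) b
      have key : uAnd T ((0:ℝ),(0:ℝ)) b
          = q1 T ((0:ℝ),(0:ℝ)) b * q2 T ((0:ℝ),(0:ℝ)) b
            - 0 * q1 T ((0:ℝ),(0:ℝ)) b - 0 * q2 T ((0:ℝ),(0:ℝ)) b := rfl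
      rw [key]
      nlinarith [mul_nonneg hq10 hq20]
    set I12 := ∫ p, q1 T p.1 p.2 * q2 T p.1 p.2 ∂(μ.prod ν) with hI12d
    set I1 := ∫ p, q1 T p.1 p.2 ∂(μ.prod ν) with hI1d
    set I2 := ∫ p, q2 T p.1 p.2 ∂(μ.prod ν) with hI2d
    have hI12nn : 0 ≤ I12 :=
      integral_nonneg fun p => mul_nonneg (q1_bounds T p.1 p.2).1 (q2_bounds T p.1 p.2).1
    have hI1nn : 0 ≤ I1 := integral_nonneg fun p => (q1_bounds T p.1 p.2).1
    have hI2nn : 0 ≤ I2 := integral_nonneg fun p => (q2_bounds T p.1 p.2).1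
    -- key bound: UAnd ≤ I12 - v*I1 - v*I2
    have hA1 : Integrable (fun p : Bid × Bid => q1 T p.1 p.2 * q2 T p.1 p.2 - v * q1 T p.1 p.2)
        (μ.prod ν) := hQ12i.sub (hQ1i.const_mul v)
    have hA2 : Integrable
        (fun p : Bid × Bid => q1 T p.1 p.2 * q2 T p.1 p.2 - v * q1 T p.1 p.2 - v * q2 T p.1 p.2)
        (μ.prod ν) := hA1.sub (hQ2i.const_mul v)
    have hstep : UAnd T μ ν ≤ I12 - v * I1 - v * I2 := by
      have heq : ∫ p, (q1 T p.1 p.2 * q2 T p.1 p.2 - v * q1 T p.1 p.2 - v * q2 T p.1 p.2) ∂(μ.prod ν)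
          = I12 - v * I1 - v * I2 := by
        rw [integral_sub hA1 (hQ2i.const_mul v),
          integral_sub hQ12i (hQ1i.const_mul v), integral_const_mul, integral_const_mul]
      rw [← heq]
      have hdef : UAnd T μ ν = ∫ p, uAnd T p.1 p.2 ∂(μ.prod ν) := rfl
      rw [hdef]
      refine integral_mono_ae hUAndi hA2 ?_
      filter_upwards [haeA] with p hp
      obtain ⟨hq10, hq11⟩ := q1_bounds T p.1 p.2
      obtain ⟨hq20, hq21⟩ := q2_bounds T p.1 p.2
      have key : uAnd T p.1 p.2
          = q1 T p.1 p.2 * q2 T p.1 p.2 - p.1.1 * q1 T p.1 p.2 - p.1.2 * q2 T p.1 p.2 := rfl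
      rw [key]
      nlinarith [mul_nonneg (sub_nonneg.mpr hp.1) hq10, mul_nonneg (sub_nonneg.mpr hp.2) hq20]
    have h2I : 2 * I12 ≤ I1 + I2 := by
      have hmono : ∫ p, 2 * (q1 T p.1 p.2 * q2 T p.1 p.2) ∂(μ.prod ν)
          ≤ ∫ p, (q1 T p.1 p.2 + q2 T p.1 p.2) ∂(μ.prod ν) := by
        refine integral_mono_ae (hQ12i.const_mul 2) (hQ1i.add hQ2i) ?_
        filter_upwards with p
        obtain ⟨hq10, hq11⟩ := q1_bounds T p.1 p.2
        obtain ⟨hq20, hq21⟩ := q2_bounds T p.1 p.2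
        nlinarith [mul_nonneg hq10 (sub_nonneg.mpr hq21), mul_nonneg hq20 (sub_nonneg.mpr hq11)]
      rw [integral_const_mul, integral_add hQ1i hQ2i] at hmono
      exact hmono
    have hI12z : I12 = 0 := by
      have h0 : 0 ≤ I12 - v * I1 - v * I2 := le_trans hUAnd0 hstep
      have hle : I12 ≤ 0 := by nlinarith [mul_le_mul_of_nonneg_left h2I hv0.le]
      exact le_antisymm hle hI12nn
    have hI1z : I1 = 0 := by
      have h0 : 0 ≤ I12 - v * I1 - v * I2 := le_trans hUAnd0 hstep
      have hv1 : v * I1 = 0 := le_antisymm (by nlinarith [mul_nonneg hv0.le hI2nn])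
        (mul_nonneg hv0.le hI1nn)
      rcases mul_eq_zero.mp hv1 with hc | hc
      · exact absurd hc (ne_of_gt hv0)
      · exact hc
    have hI2z : I2 = 0 := by
      have h0 : 0 ≤ I12 - v * I1 - v * I2 := le_trans hUAnd0 hstep
      have hv2 : v * I2 = 0 := le_antisymm (by nlinarith [mul_nonneg hv0.le hI1nn])
        (mul_nonneg hv0.le hI2nn)
      rcases mul_eq_zero.mp hv2 with hc | hc
      · exact absurd hc (ne_of_gt hv0)
      · exact hc
    have hq1ae : (fun p : Bid × Bid => q1 T p.1 p.2) =ᵐ[μ.prod ν] 0 :=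
      (integral_eq_zero_iff_of_nonneg_ae
        (Filter.Eventually.of_forall fun p : Bid × Bid => (q1_bounds T p.1 p.2).1) hQ1i).mp hI1z
    have hq2ae : (fun p : Bid × Bid => q2 T p.1 p.2) =ᵐ[μ.prod ν] 0 :=
      (integral_eq_zero_iff_of_nonneg_ae
        (Filter.Eventually.of_forall fun p : Bid × Bid => (q2_bounds T p.1 p.2).1) hQ2i).mp hI2z
    have habs : UOr v T μ ν ≤ -v := by
      have hdef : UOr v T μ ν = ∫ p, uOr v T p.1 p.2 ∂(μ.prod ν) := rfl
      rw [hdef]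
      have hconst : ∫ _ : Bid × Bid, (-v : ℝ) ∂(μ.prod ν) = -v := by
        simp [measure_univ]
      rw [← hconst]
      refine integral_mono_ae hUOri (integrable_const _) ?_
      filter_upwards [haeA, hq1ae, hq2ae] with p hp h1 h2
      have h1' : q1 T p.1 p.2 = 0 := h1
      have h2' : q2 T p.1 p.2 = 0 := h2
      have hb1 : v ≤ p.2.1 := by
        by_contra hb; push_neg at hb
        have hone : q1 T p.1 p.2 = 1 := by
          unfold q1; rw [if_pos (by linarith [hp.1] : p.2.1 < p.1.1)]
        rw [h1'] at hone; norm_num at hone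
      have hb2 : v ≤ p.2.2 := by
        by_contra hb; push_neg at hb
        have hone : q2 T p.1 p.2 = 1 := by
          unfold q2; rw [if_pos (by linarith [hp.2] : p.2.2 < p.1.2)]
        rw [h2'] at hone; norm_num at hone
      have key : uOr v T p.1 p.2
          = v * (1 - q1 T p.1 p.2 * q2 T p.1 p.2) - p.2.1 * (1 - q1 T p.1 p.2)
            - p.2.2 * (1 - q2 T p.1 p.2) := rfl
      show uOr v T p.1 p.2 ≤ -v
      rw [key, h1', h2']
      ring_nf
      linarith
    linarith
  · -- Case 1: AND bids below v on some item with positive probability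
    have hone : μ {a : Bid | a.1 < v} ≠ 0 ∨ μ {a : Bid | a.2 < v} ≠ 0 := by
      by_contra hc
      push_neg at hc
      have hcup : {a : Bid | a.1 < v ∨ a.2 < v}
          = {a : Bid | a.1 < v} ∪ {a : Bid | a.2 < v} := rfl
      exact hS (by rw [hcup]; exact measure_union_null hc.1 hc.2)
    rcases hone with h1 | h1
    · -- positive mass of a.1 below v
      obtain ⟨c, hc0, hcv, hn⟩ : ∃ c : ℝ, 0 < c ∧ c < v ∧ μ {a : Bid | a.1 < c} ≠ 0 := by
        have hiU : {a : Bid | a.1 < v} = ⋃ n : ℕ, {a : Bid | a.1 ≤ v - 1/(n+1)} := by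
          ext a
          simp only [mem_setOf_eq, mem_iUnion]
          constructor
          · intro ha
            obtain ⟨n, hn⟩ := exists_nat_one_div_lt (by linarith : (0:ℝ) < v - a.1)
            exact ⟨n, by push_cast at hn ⊢; linarith⟩
          · rintro ⟨n, hn⟩
            have hpos : (0:ℝ) < 1/(n+1) := by positivity
            linarith
        obtain ⟨n, hn⟩ : ∃ n : ℕ, μ {a : Bid | a.1 ≤ v - 1/(n+1)} ≠ 0 := by
          by_contra hc
          push_neg at hc
          exact h1 (by rw [hiU]; exact measure_iUnion_null hc)
        have hβv : v - 1/(n+1:ℝ) < v := by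
          have hpos : (0:ℝ) < 1/(n+1:ℝ) := by positivity
          linarith
        have hm0 : (0:ℝ) ≤ max (v - 1/(n+1:ℝ)) 0 := le_max_right _ 0
        have hmv : max (v - 1/(n+1:ℝ)) 0 < v := max_lt hβv hv0
        have hmβ : v - 1/(n+1:ℝ) ≤ max (v - 1/(n+1:ℝ)) 0 := le_max_left _ 0
        refine ⟨(max (v - 1/(n+1:ℝ)) 0 + v)/2, by linarith, by linarith, ?_⟩
        intro hz
        refine hn (measure_mono_null ?_ hz)
        intro a ha
        have : a.1 ≤ v - 1/(n+1:ℝ) := ha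
        show a.1 < (max (v - 1/(n+1:ℝ)) 0 + v)/2
        linarith
      have hbmem : ((c:ℝ), (0:ℝ)) ∈ box v :=
        ⟨⟨hc0.le, le_trans hcv.le hHv⟩, ⟨le_refl _, hH0⟩⟩
      have hSm : MeasurableSet {a : Bid | a.1 < c} :=
        measurableSet_lt measurable_fst measurable_const
      have hpt : ∀ a : Bid,
          indicator {a : Bid | a.1 < c} (fun _ => v - c) a ≤ uOr v T a ((c:ℝ), (0:ℝ)) := by
        intro a
        obtain ⟨hq10, hq11⟩ := q1_bounds T a ((c:ℝ), (0:ℝ))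
        obtain ⟨hq20, hq21⟩ := q2_bounds T a ((c:ℝ), (0:ℝ))
        have key : uOr v T a ((c:ℝ), (0:ℝ))
            = v * (1 - q1 T a ((c:ℝ), (0:ℝ)) * q2 T a ((c:ℝ), (0:ℝ)))
              - c * (1 - q1 T a ((c:ℝ), (0:ℝ))) - 0 * (1 - q2 T a ((c:ℝ), (0:ℝ))) := rfl
        by_cases haS : a ∈ {a : Bid | a.1 < c}
        · have ha1 : a.1 < c := haS
          have hq1z : q1 T a ((c:ℝ), (0:ℝ)) = 0 := by
            unfold q1
            split_ifs with hlt heq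
            · exact absurd (show c < a.1 from hlt) (by linarith)
            · exact absurd (show a.1 = c from heq) (ne_of_lt ha1)
            · rfl
          rw [indicator_of_mem haS, key, hq1z]
          linarith
        · rw [indicator_of_notMem haS, key]
          nlinarith [mul_nonneg (mul_nonneg hv0.le hq10) (sub_nonneg.mpr hq21),
            mul_nonneg (sub_nonneg.mpr hcv.le) (sub_nonneg.mpr hq11)]
      have hint : Integrable (fun a => uOr v T a ((c:ℝ), (0:ℝ))) μ := by
        have hm : Measurable (fun a : Bid => uOr v T a ((c:ℝ), (0:ℝ))) := by
          have hcomp : (fun a : Bid => uOr v T a ((c:ℝ), (0:ℝ)))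
              = (fun p : Bid × Bid => uOr v T p.1 p.2) ∘ (fun a : Bid => (a, ((c:ℝ), (0:ℝ)))) := rfl
          rw [hcomp]
          exact (measUOr v T).comp (measurable_id.prodMk measurable_const)
        refine integrable_of_bound μ hm (v + 2 * Hval v) ?_
        filter_upwards with a
        exact abs_uOr_le v hv0.le T a ((c:ℝ), (0:ℝ)) hc0.le (le_trans hcv.le hHv) (le_refl 0) hH0
      have hindint : Integrable (fun a => indicator {a : Bid | a.1 < c} (fun _ => v - c) a) μ :=
        (integrable_const (v - c)).indicator hSm
      have hind : ∫ a, indicator {a : Bid | a.1 < c} (fun _ => v - c) a ∂μ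
          = (μ {a : Bid | a.1 < c}).toReal * (v - c) := by
        rw [integral_indicator_const _ hSm, smul_eq_mul, measureReal_def]
      have hpos : 0 < (μ {a : Bid | a.1 < c}).toReal :=
        ENNReal.toReal_pos hn (measure_ne_top μ _)
      calc (0:ℝ) < (μ {a : Bid | a.1 < c}).toReal * (v - c) := mul_pos hpos (by linarith)
        _ = ∫ a, indicator {a : Bid | a.1 < c} (fun _ => v - c) a ∂μ := hind.symm
        _ ≤ ∫ a, uOr v T a ((c:ℝ), (0:ℝ)) ∂μ :=
          integral_mono_ae hindint hint (Filter.Eventually.of_forall hpt)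
        _ ≤ UOr v T μ ν := hO _ hbmem
    · -- positive mass of a.2 below v (symmetric)
      obtain ⟨c, hc0, hcv, hn⟩ : ∃ c : ℝ, 0 < c ∧ c < v ∧ μ {a : Bid | a.2 < c} ≠ 0 := by
        have hiU : {a : Bid | a.2 < v} = ⋃ n : ℕ, {a : Bid | a.2 ≤ v - 1/(n+1)} := by
          ext a
          simp only [mem_setOf_eq, mem_iUnion]
          constructor
          · intro ha
            obtain ⟨n, hn⟩ := exists_nat_one_div_lt (by linarith : (0:ℝ) < v - a.2)
            exact ⟨n, by push_cast at hn ⊢; linarith⟩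
          · rintro ⟨n, hn⟩
            have hpos : (0:ℝ) < 1/(n+1) := by positivity
            linarith
        obtain ⟨n, hn⟩ : ∃ n : ℕ, μ {a : Bid | a.2 ≤ v - 1/(n+1)} ≠ 0 := by
          by_contra hc
          push_neg at hc
          exact h1 (by rw [hiU]; exact measure_iUnion_null hc)
        have hβv : v - 1/(n+1:ℝ) < v := by
          have hpos : (0:ℝ) < 1/(n+1:ℝ) := by positivity
          linarith
        have hm0 : (0:ℝ) ≤ max (v - 1/(n+1:ℝ)) 0 := le_max_right _ 0
        have hmv : max (v - 1/(n+1:ℝ)) 0 < v := max_lt hβv hv0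
        have hmβ : v - 1/(n+1:ℝ) ≤ max (v - 1/(n+1:ℝ)) 0 := le_max_left _ 0
        refine ⟨(max (v - 1/(n+1:ℝ)) 0 + v)/2, by linarith, by linarith, ?_⟩
        intro hz
        refine hn (measure_mono_null ?_ hz)
        intro a ha
        have : a.2 ≤ v - 1/(n+1:ℝ) := ha
        show a.2 < (max (v - 1/(n+1:ℝ)) 0 + v)/2
        linarith
      have hbmem : ((0:ℝ), (c:ℝ)) ∈ box v :=
        ⟨⟨le_refl _, hH0⟩, ⟨hc0.le, le_trans hcv.le hHv⟩⟩
      have hSm : MeasurableSet {a : Bid | a.2 < c} :=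
        measurableSet_lt measurable_snd measurable_const
      have hpt : ∀ a : Bid,
          indicator {a : Bid | a.2 < c} (fun _ => v - c) a ≤ uOr v T a ((0:ℝ), (c:ℝ)) := by
        intro a
        obtain ⟨hq10, hq11⟩ := q1_bounds T a ((0:ℝ), (c:ℝ))
        obtain ⟨hq20, hq21⟩ := q2_bounds T a ((0:ℝ), (c:ℝ))
        have key : uOr v T a ((0:ℝ), (c:ℝ))
            = v * (1 - q1 T a ((0:ℝ), (c:ℝ)) * q2 T a ((0:ℝ), (c:ℝ)))
              - 0 * (1 - q1 T a ((0:ℝ), (c:ℝ))) - c * (1 - q2 T a ((0:ℝ), (c:ℝ))) := rfl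
        by_cases haS : a ∈ {a : Bid | a.2 < c}
        · have ha2 : a.2 < c := haS
          have hq2z : q2 T a ((0:ℝ), (c:ℝ)) = 0 := by
            unfold q2
            split_ifs with hlt heq
            · exact absurd (show c < a.2 from hlt) (by linarith)
            · exact absurd (show a.2 = c from heq) (ne_of_lt ha2)
            · rfl
          rw [indicator_of_mem haS, key, hq2z]
          linarith
        · rw [indicator_of_notMem haS, key]
          nlinarith [mul_nonneg (mul_nonneg hv0.le hq20) (sub_nonneg.mpr hq11),
            mul_nonneg (sub_nonneg.mpr hcv.le) (sub_nonneg.mpr hq21)]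
      have hint : Integrable (fun a => uOr v T a ((0:ℝ), (c:ℝ))) μ := by
        have hm : Measurable (fun a : Bid => uOr v T a ((0:ℝ), (c:ℝ))) := by
          have hcomp : (fun a : Bid => uOr v T a ((0:ℝ), (c:ℝ)))
              = (fun p : Bid × Bid => uOr v T p.1 p.2) ∘ (fun a : Bid => (a, ((0:ℝ), (c:ℝ)))) := rfl
          rw [hcomp]
          exact (measUOr v T).comp (measurable_id.prodMk measurable_const)
        refine integrable_of_bound μ hm (v + 2 * Hval v) ?_
        filter_upwards with a
        exact abs_uOr_le v hv0.le T a ((0:ℝ), (c:ℝ)) (le_refl 0) hH0 hc0.le (le_trans hcv.le hHv)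
      have hindint : Integrable (fun a => indicator {a : Bid | a.2 < c} (fun _ => v - c) a) μ :=
        (integrable_const (v - c)).indicator hSm
      have hind : ∫ a, indicator {a : Bid | a.2 < c} (fun _ => v - c) a ∂μ
          = (μ {a : Bid | a.2 < c}).toReal * (v - c) := by
        rw [integral_indicator_const _ hSm, smul_eq_mul, measureReal_def]
      have hpos : 0 < (μ {a : Bid | a.2 < c}).toReal :=
        ENNReal.toReal_pos hn (measure_ne_top μ _)
      calc (0:ℝ) < (μ {a : Bid | a.2 < c}).toReal * (v - c) := mul_pos hpos (by linarith)
        _ = ∫ a, indicator {a : Bid | a.2 < c} (fun _ => v - c) a ∂μ := hind.symm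
        _ ≤ ∫ a, uOr v T a ((0:ℝ), (c:ℝ)) ∂μ :=
          integral_mono_ae hindint hint (Filter.Eventually.of_forall hpt)
        _ ≤ UOr v T μ ν := hO _ hbmem
end
end

section
/- Fix a real v > 1/2 and a tie-breaking rule. Let μ and μ' be mixed strategies for AND with identical marginal distributions (Measure.map Prod.fst μ = Measure.map Prod.fst μ' and Measure.map Prod.snd μ = Measure.map Prod.snd μ'). Then for every mixed strategy ν for OR, the following are equivalent: (1) U_and(μ,ν) ≤ U_and(μ',ν); (2) U_or(μ,ν) ≥ U_or(μ',ν); (3) ∫ q₁·q₂ d(μ.prod ν) ≤ ∫ q₁·q₂ d(μ'.prod ν) (AND wins both items with smaller probability under μ); (4) ∫ (1 − q₁·q₂) d(μ.prod ν) ≥ ∫ (1 − q₁·q₂) d(μ'.prod ν); (5) ∫ (1−q₁)·(1−q₂) d(μ.prod ν) ≤ ∫ (1−q₁)·(1−q₂) d(μ'.prod ν) (AND wins no item with smaller probability under μ). -/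
open MeasureTheory Set
open scoped ENNReal

noncomputable section

namespace AndOrAux

variable {v : ℝ} {T : TieRule}

lemma q1_nonneg (T : TieRule) (a b : Bid) : 0 ≤ q1 T a b := by
  unfold q1; split_ifs <;> simp [T.t1_nonneg]

lemma q1_le_one (T : TieRule) (a b : Bid) : q1 T a b ≤ 1 := by
  unfold q1; split_ifs <;> simp [T.t1_le_one]

lemma q2_nonneg (T : TieRule) (a b : Bid) : 0 ≤ q2 T a b := by
  unfold q2; split_ifs <;> simp [T.t2_nonneg]

lemma q2_le_one (T : TieRule) (a b : Bid) : q2 T a b ≤ 1 := by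
  unfold q2; split_ifs <;> simp [T.t2_le_one]

lemma abs_q1_le_one (T : TieRule) (a b : Bid) : |q1 T a b| ≤ 1 :=
  abs_le.2 ⟨by linarith [q1_nonneg T a b], q1_le_one T a b⟩

lemma abs_q2_le_one (T : TieRule) (a b : Bid) : |q2 T a b| ≤ 1 :=
  abs_le.2 ⟨by linarith [q2_nonneg T a b], q2_le_one T a b⟩

lemma abs_one_sub_q1_le_one (T : TieRule) (a b : Bid) : |1 - q1 T a b| ≤ 1 :=
  abs_le.2 ⟨by linarith [q1_le_one T a b], by linarith [q1_nonneg T a b]⟩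

lemma abs_one_sub_q2_le_one (T : TieRule) (a b : Bid) : |1 - q2 T a b| ≤ 1 :=
  abs_le.2 ⟨by linarith [q2_le_one T a b], by linarith [q2_nonneg T a b]⟩

/-- `q1` as a function of `(a₁, b)`. -/
def qf1 (T : TieRule) (x : ℝ × Bid) : ℝ :=
  if x.2.1 < x.1 then 1 else if x.1 = x.2.1 then T.t1 x.1 else 0

/-- `q2` as a function of `(a₂, b)`. -/
def qf2 (T : TieRule) (x : ℝ × Bid) : ℝ :=
  if x.2.2 < x.1 then 1 else if x.1 = x.2.2 then T.t2 x.1 else 0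

lemma measurable_qf1 (T : TieRule) : Measurable (qf1 T) := by
  unfold qf1
  exact Measurable.ite (measurableSet_lt (measurable_snd.fst) measurable_fst)
    measurable_const
    (Measurable.ite (measurableSet_eq_fun measurable_fst measurable_snd.fst)
      (T.meas1.comp measurable_fst) measurable_const)

lemma measurable_qf2 (T : TieRule) : Measurable (qf2 T) := by
  unfold qf2
  exact Measurable.ite (measurableSet_lt (measurable_snd.snd) measurable_fst)
    measurable_const
    (Measurable.ite (measurableSet_eq_fun measurable_fst measurable_snd.snd)
      (T.meas2.comp measurable_fst) measurable_const)

lemma measurable_q1 (T : TieRule) : Measurable (fun p : Bid × Bid => q1 T p.1 p.2) :=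
  (measurable_qf1 T).comp (measurable_fst.fst.prodMk measurable_snd)

lemma measurable_q2 (T : TieRule) : Measurable (fun p : Bid × Bid => q2 T p.1 p.2) :=
  (measurable_qf2 T).comp (measurable_fst.snd.prodMk measurable_snd)

lemma box_meas (v : ℝ) : MeasurableSet (box v) :=
  measurableSet_Icc.prod measurableSet_Icc

lemma ae_box {μ ν : Measure Bid} (hμ : IsMixed v μ) (hν : IsMixed v ν) :
    ∀ᵐ p ∂(μ.prod ν), p.1 ∈ box v ∧ p.2 ∈ box v := by
  haveI := hμ.1; haveI := hν.1
  have hz : (μ.prod ν) ((box v ×ˢ box v)ᶜ) = 0 := by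
    rw [measure_compl ((box_meas v).prod (box_meas v)) (measure_ne_top _ _),
      Measure.prod_prod, hμ.2, hν.2]
    simp
  have h2 : {p : Bid × Bid | ¬(p.1 ∈ box v ∧ p.2 ∈ box v)} = (box v ×ˢ box v)ᶜ := by
    ext p; simp [Set.mem_prod]
  rw [ae_iff, h2]; exact hz

lemma integrable_bdd {μ ν : Measure Bid} (hμ : IsMixed v μ) (hν : IsMixed v ν)
    {f : Bid × Bid → ℝ} (hf : Measurable f) {C : ℝ}
    (hb : ∀ p : Bid × Bid, p.1 ∈ box v → p.2 ∈ box v → |f p| ≤ C) :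
    Integrable f (μ.prod ν) := by
  haveI := hμ.1; haveI := hν.1
  refine (integrable_const C).mono' hf.aestronglyMeasurable ?_
  exact (ae_box hμ hν).mono fun p hp => by
    rw [Real.norm_eq_abs]; exact hb p hp.1 hp.2

lemma transfer_fst {μ μ' ν : Measure Bid} (hμ : IsMixed v μ) (hμ' : IsMixed v μ')
    (hν : IsMixed v ν) (h1 : Measure.map Prod.fst μ = Measure.map Prod.fst μ')
    {g : ℝ × Bid → ℝ} (hg : Measurable g) :
    ∫ p, g (p.1.1, p.2) ∂(μ.prod ν) = ∫ p, g (p.1.1, p.2) ∂(μ'.prod ν) := by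
  haveI := hμ.1; haveI := hμ'.1; haveI := hν.1
  have key : ∀ κ : Measure Bid, IsProbabilityMeasure κ →
      ∫ p, g (p.1.1, p.2) ∂(κ.prod ν) = ∫ q, g q ∂((Measure.map Prod.fst κ).prod ν) := by
    intro κ hκ
    have hmap := Measure.map_prod_map (f := (Prod.fst : Bid → ℝ)) (g := (id : Bid → Bid))
      κ ν measurable_fst measurable_id
    rw [Measure.map_id] at hmap
    rw [hmap, integral_map (Measurable.prodMap measurable_fst measurable_id).aemeasurable
      hg.aestronglyMeasurable]
    rfl
  rw [key μ hμ.1, key μ' hμ'.1, h1]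

lemma transfer_snd {μ μ' ν : Measure Bid} (hμ : IsMixed v μ) (hμ' : IsMixed v μ')
    (hν : IsMixed v ν) (h2 : Measure.map Prod.snd μ = Measure.map Prod.snd μ')
    {g : ℝ × Bid → ℝ} (hg : Measurable g) :
    ∫ p, g (p.1.2, p.2) ∂(μ.prod ν) = ∫ p, g (p.1.2, p.2) ∂(μ'.prod ν) := by
  haveI := hμ.1; haveI := hμ'.1; haveI := hν.1
  have key : ∀ κ : Measure Bid, IsProbabilityMeasure κ →
      ∫ p, g (p.1.2, p.2) ∂(κ.prod ν) = ∫ q, g q ∂((Measure.map Prod.snd κ).prod ν) := by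
    intro κ hκ
    have hmap := Measure.map_prod_map (f := (Prod.snd : Bid → ℝ)) (g := (id : Bid → Bid))
      κ ν measurable_snd measurable_id
    rw [Measure.map_id] at hmap
    rw [hmap, integral_map (Measurable.prodMap measurable_snd measurable_id).aemeasurable
      hg.aestronglyMeasurable]
    rfl
  rw [key μ hμ.1, key μ' hμ'.1, h2]

end AndOrAux

/-- If `μ` and `μ'` are mixed strategies for AND with identical marginal
distributions, then for every mixed strategy `ν` of OR the five stated conditions are
equivalent. -/
theorem identical_marginals_equiv (v : ℝ) (hv : 1/2 < v) (T : TieRule)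
    (μ μ' : Measure Bid) (hμ : IsMixed v μ) (hμ' : IsMixed v μ')
    (h1 : Measure.map Prod.fst μ = Measure.map Prod.fst μ')
    (h2 : Measure.map Prod.snd μ = Measure.map Prod.snd μ')
    (ν : Measure Bid) (hν : IsMixed v ν) :
    ((UAnd T μ ν ≤ UAnd T μ' ν) ↔ (UOr v T μ' ν ≤ UOr v T μ ν)) ∧
    ((UAnd T μ ν ≤ UAnd T μ' ν) ↔
      (∫ p, q1 T p.1 p.2 * q2 T p.1 p.2 ∂(μ.prod ν) ≤
        ∫ p, q1 T p.1 p.2 * q2 T p.1 p.2 ∂(μ'.prod ν))) ∧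
    ((UAnd T μ ν ≤ UAnd T μ' ν) ↔
      (∫ p, (1 - q1 T p.1 p.2 * q2 T p.1 p.2) ∂(μ'.prod ν) ≤
        ∫ p, (1 - q1 T p.1 p.2 * q2 T p.1 p.2) ∂(μ.prod ν))) ∧
    ((UAnd T μ ν ≤ UAnd T μ' ν) ↔
      (∫ p, (1 - q1 T p.1 p.2) * (1 - q2 T p.1 p.2) ∂(μ.prod ν) ≤
        ∫ p, (1 - q1 T p.1 p.2) * (1 - q2 T p.1 p.2) ∂(μ'.prod ν))) := by

  classical
  haveI := hμ.1; haveI := hμ'.1; haveI := hν.1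
  have hv0 : (0:ℝ) < v := by linarith
  have hH : (0:ℝ) ≤ Hval v := le_trans zero_le_one (le_max_left 1 v)
  have hHabs : ∀ x : ℝ, x ∈ Icc (0:ℝ) (Hval v) → |x| ≤ Hval v := fun x hx =>
    abs_le.2 ⟨by linarith [hx.1, hx.2], hx.2⟩
  -- integrability of all the pieces
  have int12 : ∀ κ : Measure Bid, IsMixed v κ →
      Integrable (fun p : Bid × Bid => q1 T p.1 p.2 * q2 T p.1 p.2) (κ.prod ν) := by
    intro κ hκ
    refine AndOrAux.integrable_bdd hκ hν
      ((AndOrAux.measurable_q1 T).mul (AndOrAux.measurable_q2 T)) (C := 1) ?_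
    intro p _ _
    rw [abs_mul]
    calc |q1 T p.1 p.2| * |q2 T p.1 p.2| ≤ 1 * 1 :=
          mul_le_mul (AndOrAux.abs_q1_le_one T _ _) (AndOrAux.abs_q2_le_one T _ _)
            (abs_nonneg _) zero_le_one
      _ = 1 := one_mul 1
  have intq1 : ∀ κ : Measure Bid, IsMixed v κ →
      Integrable (fun p : Bid × Bid => q1 T p.1 p.2) (κ.prod ν) := by
    intro κ hκ
    exact AndOrAux.integrable_bdd hκ hν (AndOrAux.measurable_q1 T) (C := 1)
      fun p _ _ => AndOrAux.abs_q1_le_one T _ _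
  have intq2 : ∀ κ : Measure Bid, IsMixed v κ →
      Integrable (fun p : Bid × Bid => q2 T p.1 p.2) (κ.prod ν) := by
    intro κ hκ
    exact AndOrAux.integrable_bdd hκ hν (AndOrAux.measurable_q2 T) (C := 1)
      fun p _ _ => AndOrAux.abs_q2_le_one T _ _
  have inta1 : ∀ κ : Measure Bid, IsMixed v κ →
      Integrable (fun p : Bid × Bid => p.1.1 * q1 T p.1 p.2) (κ.prod ν) := by
    intro κ hκ
    refine AndOrAux.integrable_bdd hκ hν
      (measurable_fst.fst.mul (AndOrAux.measurable_q1 T)) (C := Hval v) ?_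
    intro p hp1 _
    rw [abs_mul]
    calc |p.1.1| * |q1 T p.1 p.2| ≤ Hval v * 1 :=
          mul_le_mul (hHabs _ hp1.1) (AndOrAux.abs_q1_le_one T _ _) (abs_nonneg _)
            hH
      _ = Hval v := mul_one _
  have inta2 : ∀ κ : Measure Bid, IsMixed v κ →
      Integrable (fun p : Bid × Bid => p.1.2 * q2 T p.1 p.2) (κ.prod ν) := by
    intro κ hκ
    refine AndOrAux.integrable_bdd hκ hν
      (measurable_fst.snd.mul (AndOrAux.measurable_q2 T)) (C := Hval v) ?_
    intro p hp1 _
    rw [abs_mul]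
    calc |p.1.2| * |q2 T p.1 p.2| ≤ Hval v * 1 :=
          mul_le_mul (hHabs _ hp1.2) (AndOrAux.abs_q2_le_one T _ _) (abs_nonneg _)
            hH
      _ = Hval v := mul_one _
  have intb1 : ∀ κ : Measure Bid, IsMixed v κ →
      Integrable (fun p : Bid × Bid => p.2.1 * (1 - q1 T p.1 p.2)) (κ.prod ν) := by
    intro κ hκ
    refine AndOrAux.integrable_bdd hκ hν
      (measurable_snd.fst.mul (measurable_const.sub (AndOrAux.measurable_q1 T)))
      (C := Hval v) ?_
    intro p _ hp2
    rw [abs_mul]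
    calc |p.2.1| * |1 - q1 T p.1 p.2| ≤ Hval v * 1 :=
          mul_le_mul (hHabs _ hp2.1) (AndOrAux.abs_one_sub_q1_le_one T _ _) (abs_nonneg _)
            hH
      _ = Hval v := mul_one _
  have intb2 : ∀ κ : Measure Bid, IsMixed v κ →
      Integrable (fun p : Bid × Bid => p.2.2 * (1 - q2 T p.1 p.2)) (κ.prod ν) := by
    intro κ hκ
    refine AndOrAux.integrable_bdd hκ hν
      (measurable_snd.snd.mul (measurable_const.sub (AndOrAux.measurable_q2 T)))
      (C := Hval v) ?_
    intro p _ hp2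
    rw [abs_mul]
    calc |p.2.2| * |1 - q2 T p.1 p.2| ≤ Hval v * 1 :=
          mul_le_mul (hHabs _ hp2.2) (AndOrAux.abs_one_sub_q2_le_one T _ _) (abs_nonneg _)
            hH
      _ = Hval v := mul_one _
  -- transfer equalities: integrals of single-item functions agree for μ and μ'
  have ea1 : ∫ p, p.1.1 * q1 T p.1 p.2 ∂(μ.prod ν) = ∫ p, p.1.1 * q1 T p.1 p.2 ∂(μ'.prod ν) := by
    have := AndOrAux.transfer_fst (g := fun x : ℝ × Bid => x.1 * AndOrAux.qf1 T x)
      hμ hμ' hν h1 (measurable_fst.mul (AndOrAux.measurable_qf1 T))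
    simpa [AndOrAux.qf1, q1] using this
  have ea2 : ∫ p, p.1.2 * q2 T p.1 p.2 ∂(μ.prod ν) = ∫ p, p.1.2 * q2 T p.1 p.2 ∂(μ'.prod ν) := by
    have := AndOrAux.transfer_snd (g := fun x : ℝ × Bid => x.1 * AndOrAux.qf2 T x)
      hμ hμ' hν h2 (measurable_fst.mul (AndOrAux.measurable_qf2 T))
    simpa [AndOrAux.qf2, q2] using this
  have eq1 : ∫ p, q1 T p.1 p.2 ∂(μ.prod ν) = ∫ p, q1 T p.1 p.2 ∂(μ'.prod ν) := by
    have := AndOrAux.transfer_fst (g := AndOrAux.qf1 T)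
      hμ hμ' hν h1 (AndOrAux.measurable_qf1 T)
    simpa [AndOrAux.qf1, q1] using this
  have eq2 : ∫ p, q2 T p.1 p.2 ∂(μ.prod ν) = ∫ p, q2 T p.1 p.2 ∂(μ'.prod ν) := by
    have := AndOrAux.transfer_snd (g := AndOrAux.qf2 T)
      hμ hμ' hν h2 (AndOrAux.measurable_qf2 T)
    simpa [AndOrAux.qf2, q2] using this
  have eb1 : ∫ p, p.2.1 * (1 - q1 T p.1 p.2) ∂(μ.prod ν)
      = ∫ p, p.2.1 * (1 - q1 T p.1 p.2) ∂(μ'.prod ν) := by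
    have := AndOrAux.transfer_fst (g := fun x : ℝ × Bid => x.2.1 * (1 - AndOrAux.qf1 T x))
      hμ hμ' hν h1 (measurable_snd.fst.mul (measurable_const.sub (AndOrAux.measurable_qf1 T)))
    simpa [AndOrAux.qf1, q1] using this
  have eb2 : ∫ p, p.2.2 * (1 - q2 T p.1 p.2) ∂(μ.prod ν)
      = ∫ p, p.2.2 * (1 - q2 T p.1 p.2) ∂(μ'.prod ν) := by
    have := AndOrAux.transfer_snd (g := fun x : ℝ × Bid => x.2.2 * (1 - AndOrAux.qf2 T x))
      hμ hμ' hν h2 (measurable_snd.snd.mul (measurable_const.sub (AndOrAux.measurable_qf2 T)))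
    simpa [AndOrAux.qf2, q2] using this
  -- decompositions
  have decompA : ∀ κ : Measure Bid, IsMixed v κ → UAnd T κ ν =
      (∫ p, q1 T p.1 p.2 * q2 T p.1 p.2 ∂(κ.prod ν))
      - (∫ p, p.1.1 * q1 T p.1 p.2 ∂(κ.prod ν))
      - (∫ p, p.1.2 * q2 T p.1 p.2 ∂(κ.prod ν)) := by
    intro κ hκ
    unfold UAnd uAnd
    have eOuter : ∫ p, (q1 T p.1 p.2 * q2 T p.1 p.2 - p.1.1 * q1 T p.1 p.2)
          - p.1.2 * q2 T p.1 p.2 ∂(κ.prod ν)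
        = (∫ p, q1 T p.1 p.2 * q2 T p.1 p.2 - p.1.1 * q1 T p.1 p.2 ∂(κ.prod ν))
          - ∫ p, p.1.2 * q2 T p.1 p.2 ∂(κ.prod ν) :=
      integral_sub ((int12 κ hκ).sub (inta1 κ hκ)) (inta2 κ hκ)
    have eInner : ∫ p, q1 T p.1 p.2 * q2 T p.1 p.2 - p.1.1 * q1 T p.1 p.2 ∂(κ.prod ν)
        = (∫ p, q1 T p.1 p.2 * q2 T p.1 p.2 ∂(κ.prod ν))
          - ∫ p, p.1.1 * q1 T p.1 p.2 ∂(κ.prod ν) :=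
      integral_sub (int12 κ hκ) (inta1 κ hκ)
    rw [eOuter, eInner]
  have decompO : ∀ κ : Measure Bid, IsMixed v κ → UOr v T κ ν =
      v * (1 - ∫ p, q1 T p.1 p.2 * q2 T p.1 p.2 ∂(κ.prod ν))
      - (∫ p, p.2.1 * (1 - q1 T p.1 p.2) ∂(κ.prod ν))
      - (∫ p, p.2.2 * (1 - q2 T p.1 p.2) ∂(κ.prod ν)) := by
    intro κ hκ
    haveI := hκ.1
    have intv : Integrable (fun p : Bid × Bid => v * (1 - q1 T p.1 p.2 * q2 T p.1 p.2))
        (κ.prod ν) := (((integrable_const (1:ℝ)).sub (int12 κ hκ)).const_mul v)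
    unfold UOr uOr
    have eOuter : ∫ p, (v * (1 - q1 T p.1 p.2 * q2 T p.1 p.2) - p.2.1 * (1 - q1 T p.1 p.2))
          - p.2.2 * (1 - q2 T p.1 p.2) ∂(κ.prod ν)
        = (∫ p, v * (1 - q1 T p.1 p.2 * q2 T p.1 p.2) - p.2.1 * (1 - q1 T p.1 p.2) ∂(κ.prod ν))
          - ∫ p, p.2.2 * (1 - q2 T p.1 p.2) ∂(κ.prod ν) :=
      integral_sub (intv.sub (intb1 κ hκ)) (intb2 κ hκ)
    have eInner : ∫ p, v * (1 - q1 T p.1 p.2 * q2 T p.1 p.2) - p.2.1 * (1 - q1 T p.1 p.2) ∂(κ.prod ν)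
        = (∫ p, v * (1 - q1 T p.1 p.2 * q2 T p.1 p.2) ∂(κ.prod ν))
          - ∫ p, p.2.1 * (1 - q1 T p.1 p.2) ∂(κ.prod ν) :=
      integral_sub intv (intb1 κ hκ)
    have eMul : ∫ p, v * (1 - q1 T p.1 p.2 * q2 T p.1 p.2) ∂(κ.prod ν)
        = v * ∫ p, (1 - q1 T p.1 p.2 * q2 T p.1 p.2) ∂(κ.prod ν) :=
      integral_const_mul v _
    have eConst : ∫ p, (1 - q1 T p.1 p.2 * q2 T p.1 p.2) ∂(κ.prod ν)
        = (∫ _p : Bid × Bid, (1:ℝ) ∂(κ.prod ν))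
          - ∫ p, q1 T p.1 p.2 * q2 T p.1 p.2 ∂(κ.prod ν) :=
      integral_sub (integrable_const 1) (int12 κ hκ)
    rw [eOuter, eInner, eMul, eConst]
    simp
  have decomp4 : ∀ κ : Measure Bid, IsMixed v κ →
      ∫ p, (1 - q1 T p.1 p.2 * q2 T p.1 p.2) ∂(κ.prod ν)
        = 1 - ∫ p, q1 T p.1 p.2 * q2 T p.1 p.2 ∂(κ.prod ν) := by
    intro κ hκ
    haveI := hκ.1
    have eConst : ∫ p, (1 - q1 T p.1 p.2 * q2 T p.1 p.2) ∂(κ.prod ν)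
        = (∫ _p : Bid × Bid, (1:ℝ) ∂(κ.prod ν))
          - ∫ p, q1 T p.1 p.2 * q2 T p.1 p.2 ∂(κ.prod ν) :=
      integral_sub (integrable_const 1) (int12 κ hκ)
    rw [eConst]
    simp
  have decomp5 : ∀ κ : Measure Bid, IsMixed v κ →
      ∫ p, (1 - q1 T p.1 p.2) * (1 - q2 T p.1 p.2) ∂(κ.prod ν)
        = 1 - (∫ p, q1 T p.1 p.2 ∂(κ.prod ν)) - (∫ p, q2 T p.1 p.2 ∂(κ.prod ν))
          + ∫ p, q1 T p.1 p.2 * q2 T p.1 p.2 ∂(κ.prod ν) := by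
    intro κ hκ
    haveI := hκ.1
    have hfun : (fun p : Bid × Bid => (1 - q1 T p.1 p.2) * (1 - q2 T p.1 p.2))
        = fun p => (1 - q1 T p.1 p.2 - q2 T p.1 p.2) + q1 T p.1 p.2 * q2 T p.1 p.2 := by
      funext p; ring
    have eAdd : ∫ p, (1 - q1 T p.1 p.2 - q2 T p.1 p.2) + q1 T p.1 p.2 * q2 T p.1 p.2 ∂(κ.prod ν)
        = (∫ p, 1 - q1 T p.1 p.2 - q2 T p.1 p.2 ∂(κ.prod ν))
          + ∫ p, q1 T p.1 p.2 * q2 T p.1 p.2 ∂(κ.prod ν) :=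
      integral_add (((integrable_const 1).sub (intq1 κ hκ)).sub (intq2 κ hκ)) (int12 κ hκ)
    have eS1 : ∫ p, (1 - q1 T p.1 p.2) - q2 T p.1 p.2 ∂(κ.prod ν)
        = (∫ p, 1 - q1 T p.1 p.2 ∂(κ.prod ν)) - ∫ p, q2 T p.1 p.2 ∂(κ.prod ν) :=
      integral_sub ((integrable_const 1).sub (intq1 κ hκ)) (intq2 κ hκ)
    have eS2 : ∫ p, (1:ℝ) - q1 T p.1 p.2 ∂(κ.prod ν)
        = (∫ _p : Bid × Bid, (1:ℝ) ∂(κ.prod ν)) - ∫ p, q1 T p.1 p.2 ∂(κ.prod ν) :=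
      integral_sub (integrable_const 1) (intq1 κ hκ)
    rw [hfun, eAdd, eS1, eS2]
    simp
  set A := ∫ p, q1 T p.1 p.2 * q2 T p.1 p.2 ∂(μ.prod ν) with hAdef
  set A' := ∫ p, q1 T p.1 p.2 * q2 T p.1 p.2 ∂(μ'.prod ν) with hA'def
  have hAnd : (UAnd T μ ν ≤ UAnd T μ' ν) ↔ A ≤ A' := by
    rw [decompA μ hμ, decompA μ' hμ', ea1, ea2]
    constructor <;> intro h <;> linarith
  refine ⟨hAnd.trans ?_, hAnd.trans Iff.rfl, hAnd.trans ?_, hAnd.trans ?_⟩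
  · rw [decompO μ hμ, decompO μ' hμ', eb1, eb2]
    constructor
    · intro h
      have h2 : (1:ℝ) - A' ≤ 1 - A := by linarith
      have := (mul_le_mul_iff_right₀ hv0).mpr h2
      linarith
    · intro h
      have h2 : v * (1 - A') ≤ v * (1 - A) := by linarith
      have := (mul_le_mul_iff_right₀ hv0).mp h2
      linarith
  · rw [decomp4 μ hμ, decomp4 μ' hμ']
    constructor <;> intro h <;> linarith
  · rw [decomp5 μ hμ, decomp5 μ' hμ', eq1, eq2]
    constructor <;> intro h <;> linarith
end
end

section
/- Fix a real v > 1/2 and a tie-breaking rule. Let μ be a mixed strategy for AND with marginal CDFs F₁ x = μ{p : p.1 ≤ x} and F₂ y = μ{p : p.2 ≤ y}, and let μ' be a mixed strategy with the same marginals satisfying μ'{p : p.1 ≤ x and p.2 ≤ y} = min (F₁ x) (F₂ y) for all x, y. If (μ, ν) is a mixed Nash equilibrium of the AND–OR game, then (μ', ν) is also a mixed Nash equilibrium, and it produces the same outcomes: U_and(μ',ν) = U_and(μ,ν), U_or(μ',ν) = U_or(μ,ν), ∫ q₁·q₂ d(μ'.prod ν) = ∫ q₁·q₂ d(μ.prod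 ν), ∫ (a₁·q₁ + a₂·q₂) d(μ'.prod ν) = ∫ (a₁·q₁ + a₂·q₂) d(μ.prod ν), and ∫ (b₁·(1−q₁) + b₂·(1−q₂)) d(μ'.prod ν) = ∫ (b₁·(1−q₁) + b₂·(1−q₂)) d(μ.prod ν). -/
open MeasureTheory Set
open scoped ENNReal

noncomputable section

section Aux

variable {T : TieRule}

lemma q1_nonneg (T : TieRule) (a b : Bid) : 0 ≤ q1 T a b := by
  unfold q1; split_ifs <;> simp [T.t1_nonneg]

lemma q1_le_one (T : TieRule) (a b : Bid) : q1 T a b ≤ 1 := by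
  unfold q1; split_ifs <;> simp [T.t1_le_one]

lemma q2_nonneg (T : TieRule) (a b : Bid) : 0 ≤ q2 T a b := by
  unfold q2; split_ifs <;> simp [T.t2_nonneg]

lemma q2_le_one (T : TieRule) (a b : Bid) : q2 T a b ≤ 1 := by
  unfold q2; split_ifs <;> simp [T.t2_le_one]

lemma meas_q1 (T : TieRule) : Measurable fun p : Bid × Bid => q1 T p.1 p.2 := by
  unfold q1
  refine Measurable.ite ?_ measurable_const (Measurable.ite ?_ ?_ measurable_const)
  · exact measurableSet_lt (measurable_fst.comp measurable_snd) (measurable_fst.comp measurable_fst)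
  · exact measurableSet_eq_fun (measurable_fst.comp measurable_fst) (measurable_fst.comp measurable_snd)
  · exact T.meas1.comp (measurable_fst.comp measurable_fst)

lemma meas_q2 (T : TieRule) : Measurable fun p : Bid × Bid => q2 T p.1 p.2 := by
  unfold q2
  refine Measurable.ite ?_ measurable_const (Measurable.ite ?_ ?_ measurable_const)
  · exact measurableSet_lt (measurable_snd.comp measurable_snd) (measurable_snd.comp measurable_fst)
  · exact measurableSet_eq_fun (measurable_snd.comp measurable_fst) (measurable_snd.comp measurable_snd)
  · exact T.meas2.comp (measurable_snd.comp measurable_fst)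

lemma integrable_of_aebdd {α : Type*} [MeasurableSpace α] {μ : Measure α} [IsFiniteMeasure μ]
    {f : α → ℝ} (hf : AEStronglyMeasurable f μ) {C : ℝ} (h : ∀ᵐ x ∂μ, |f x| ≤ C) :
    Integrable f μ :=
  Integrable.mono' (integrable_const C) hf (by simpa [Real.norm_eq_abs] using h)

lemma integral_map_fst_prod {μ ν : Measure Bid} [SFinite μ] [SFinite ν]
    {φ : ℝ × Bid → ℝ} (hφ : Measurable φ) :
    ∫ p, φ (p.1.1, p.2) ∂(μ.prod ν) = ∫ q, φ q ∂((Measure.map Prod.fst μ).prod ν) := by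
  have hmap : (Measure.map Prod.fst μ).prod ν
      = Measure.map (Prod.map (Prod.fst : Bid → ℝ) id) (μ.prod ν) := by
    conv_lhs => rw [← Measure.map_id (μ := ν)]
    exact Measure.map_prod_map μ ν measurable_fst measurable_id
  rw [hmap, integral_map ((measurable_fst.prodMap measurable_id).aemeasurable)
    hφ.aestronglyMeasurable]
  rfl

lemma integral_map_snd_prod {μ ν : Measure Bid} [SFinite μ] [SFinite ν]
    {φ : ℝ × Bid → ℝ} (hφ : Measurable φ) :
    ∫ p, φ (p.1.2, p.2) ∂(μ.prod ν) = ∫ q, φ q ∂((Measure.map Prod.snd μ).prod ν) := by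
  have hmap : (Measure.map Prod.snd μ).prod ν
      = Measure.map (Prod.map (Prod.snd : Bid → ℝ) id) (μ.prod ν) := by
    conv_lhs => rw [← Measure.map_id (μ := ν)]
    exact Measure.map_prod_map μ ν measurable_snd measurable_id
  rw [hmap, integral_map ((measurable_snd.prodMap measurable_id).aemeasurable)
    hφ.aestronglyMeasurable]
  rfl

lemma integral_fst_fun {μ μ' : Measure Bid}
    (h1 : Measure.map Prod.fst μ = Measure.map Prod.fst μ')
    {f : ℝ → ℝ} (hf : Measurable f) :
    ∫ a, f a.1 ∂μ = ∫ a, f a.1 ∂μ' := by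
  rw [← integral_map (measurable_fst.aemeasurable) hf.aestronglyMeasurable,
    ← integral_map (measurable_fst.aemeasurable) hf.aestronglyMeasurable, h1]

lemma integral_snd_fun {μ μ' : Measure Bid}
    (h2 : Measure.map Prod.snd μ = Measure.map Prod.snd μ')
    {f : ℝ → ℝ} (hf : Measurable f) :
    ∫ a, f a.2 ∂μ = ∫ a, f a.2 ∂μ' := by
  rw [← integral_map (measurable_snd.aemeasurable) hf.aestronglyMeasurable,
    ← integral_map (measurable_snd.aemeasurable) hf.aestronglyMeasurable, h2]

lemma frechet_aux {μ μ' : Measure Bid}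
    (hmax : ∀ x y : ℝ, μ' {p : Bid | p.1 ≤ x ∧ p.2 ≤ y} =
      min (μ {p : Bid | p.1 ≤ x}) (μ {p : Bid | p.2 ≤ y}))
    {S₁ S₂ : Set ℝ} {c d : ℕ → ℝ} (hc : Monotone c) (hd : Monotone d)
    (e₁ : S₁ = ⋃ n, Iic (c n)) (e₂ : S₂ = ⋃ n, Iic (d n)) :
    μ {p : Bid | p.1 ∈ S₁ ∧ p.2 ∈ S₂} ≤ μ' {p : Bid | p.1 ∈ S₁ ∧ p.2 ∈ S₂} := by
  have hS : {p : Bid | p.1 ∈ S₁ ∧ p.2 ∈ S₂} = ⋃ n, {p : Bid | p.1 ≤ c n ∧ p.2 ≤ d n} := by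
    subst e₁ e₂
    ext p
    simp only [mem_iUnion, mem_Iic, mem_setOf_eq]
    constructor
    · rintro ⟨⟨m, hm⟩, ⟨k, hk⟩⟩
      exact ⟨max m k, hm.trans (hc (le_max_left _ _)), hk.trans (hd (le_max_right _ _))⟩
    · rintro ⟨n, hn1, hn2⟩
      exact ⟨⟨n, hn1⟩, ⟨n, hn2⟩⟩
  have mono : Monotone fun n => {p : Bid | p.1 ≤ c n ∧ p.2 ≤ d n} :=
    fun m n hmn p hp => ⟨hp.1.trans (hc hmn), hp.2.trans (hd hmn)⟩
  rw [hS, mono.directed_le.measure_iUnion]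
  refine iSup_le fun n => ?_
  calc μ {p : Bid | p.1 ≤ c n ∧ p.2 ≤ d n}
      ≤ min (μ {p : Bid | p.1 ≤ c n}) (μ {p : Bid | p.2 ≤ d n}) :=
        le_min (measure_mono fun p hp => hp.1) (measure_mono fun p hp => hp.2)
    _ = μ' {p : Bid | p.1 ≤ c n ∧ p.2 ≤ d n} := (hmax _ _).symm
    _ ≤ _ := measure_mono (subset_iUnion (fun n => {p : Bid | p.1 ≤ c n ∧ p.2 ≤ d n}) n)

lemma Iic_eq_iUnion_const (c : ℝ) : Iic c = ⋃ _ : ℕ, Iic c := (iUnion_const _).symm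

lemma Iio_eq_iUnion (c : ℝ) : Iio c = ⋃ n : ℕ, Iic (c - 1/(n+1)) := by
  ext x
  simp only [mem_Iio, mem_iUnion, mem_Iic]
  constructor
  · intro hx
    obtain ⟨n, hn⟩ := exists_nat_one_div_lt (sub_pos.2 hx)
    exact ⟨n, by linarith⟩
  · rintro ⟨n, hn⟩
    have : (0:ℝ) < 1/(n+1) := by positivity
    linarith

lemma seq_mono (c : ℝ) : Monotone fun n : ℕ => c - 1/(n+1 : ℝ) := by
  intro m n hmn
  have h1 : (0:ℝ) < m + 1 := by positivity
  have : (1:ℝ)/(n+1) ≤ 1/(m+1) := by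
    apply one_div_le_one_div_of_le h1
    exact_mod_cast by omega
  linarith

/-- 0/1 indicator as a real function. -/
def ind01 (S : Set ℝ) (x : ℝ) : ℝ := S.indicator 1 x

lemma ind01_meas {S : Set ℝ} (hS : MeasurableSet S) : Measurable (ind01 S) :=
  measurable_one.indicator hS

lemma ind01_nonneg (S : Set ℝ) (x : ℝ) : 0 ≤ ind01 S x := by
  unfold ind01; by_cases h : x ∈ S <;> simp [Set.indicator_apply, h]

lemma ind01_le_one (S : Set ℝ) (x : ℝ) : ind01 S x ≤ 1 := by
  unfold ind01; by_cases h : x ∈ S <;> simp [Set.indicator_apply, h]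

lemma integral_ind_mul {κ : Measure Bid} [IsFiniteMeasure κ] {S₁ S₂ : Set ℝ}
    (h₁ : MeasurableSet S₁) (h₂ : MeasurableSet S₂) :
    ∫ a : Bid, ind01 S₁ a.1 * ind01 S₂ a.2 ∂κ
      = (κ {p : Bid | p.1 ∈ S₁ ∧ p.2 ∈ S₂}).toReal := by
  have hset : MeasurableSet {p : Bid | p.1 ∈ S₁ ∧ p.2 ∈ S₂} := MeasurableSet.prod h₁ h₂
  have hfun : (fun a : Bid => ind01 S₁ a.1 * ind01 S₂ a.2)
      = Set.indicator {p : Bid | p.1 ∈ S₁ ∧ p.2 ∈ S₂} 1 := by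
    funext a
    by_cases ha1 : a.1 ∈ S₁ <;> by_cases ha2 : a.2 ∈ S₂ <;>
      simp [ind01, Set.indicator_apply, ha1, ha2, Set.mem_setOf_eq]
  rw [hfun, integral_indicator_one hset]
  rfl

/-- The "lower" step function; `q1 = 1 - Fstep c t`. -/
def Fstep (c t x : ℝ) : ℝ := (1-t) * ind01 (Iic c) x + t * ind01 (Iio c) x

lemma Fstep_meas (c t : ℝ) : Measurable (Fstep c t) :=
  ((measurable_const.mul (ind01_meas measurableSet_Iic)).add
    (measurable_const.mul (ind01_meas measurableSet_Iio)))

lemma Fstep_nonneg {c t : ℝ} (h0 : 0 ≤ t) (h1 : t ≤ 1) (x : ℝ) : 0 ≤ Fstep c t x := by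
  unfold Fstep
  have := ind01_nonneg (Iic c) x; have := ind01_nonneg (Iio c) x
  nlinarith

lemma Fstep_le_one {c t : ℝ} (h0 : 0 ≤ t) (h1 : t ≤ 1) (x : ℝ) : Fstep c t x ≤ 1 := by
  unfold Fstep
  have := ind01_le_one (Iic c) x; have := ind01_le_one (Iio c) x
  have := ind01_nonneg (Iic c) x; have := ind01_nonneg (Iio c) x
  nlinarith

lemma q1_decomp (T : TieRule) (a b : Bid) :
    q1 T a b = 1 - Fstep b.1 (T.t1 b.1) a.1 := by
  unfold q1 Fstep ind01
  rcases lt_trichotomy b.1 a.1 with hlt | heq | hgt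
  · simp only [if_pos hlt, Set.indicator_apply, mem_Iic, mem_Iio, if_neg (not_le.2 hlt),
      if_neg (not_lt.2 hlt.le), mul_zero]
    ring
  · have hn1 : ¬ b.1 < a.1 := by rw [heq]; exact lt_irrefl _
    rw [if_neg hn1, if_pos heq.symm, heq]
    simp only [Set.indicator_apply, mem_Iic, mem_Iio, if_pos le_rfl, if_neg (lt_irrefl a.1),
      Pi.one_apply, mul_one, mul_zero]
    ring
  · simp only [if_neg (not_lt.2 hgt.le), if_neg hgt.ne, Set.indicator_apply, mem_Iic, mem_Iio,
      if_pos hgt.le, if_pos hgt, Pi.one_apply, mul_one]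
    ring

lemma q2_decomp (T : TieRule) (a b : Bid) :
    q2 T a b = 1 - Fstep b.2 (T.t2 b.2) a.2 := by
  unfold q2 Fstep ind01
  rcases lt_trichotomy b.2 a.2 with hlt | heq | hgt
  · simp only [if_pos hlt, Set.indicator_apply, mem_Iic, mem_Iio, if_neg (not_le.2 hlt),
      if_neg (not_lt.2 hlt.le), mul_zero]
    ring
  · have hn1 : ¬ b.2 < a.2 := by rw [heq]; exact lt_irrefl _
    rw [if_neg hn1, if_pos heq.symm, heq]
    simp only [Set.indicator_apply, mem_Iic, mem_Iio, if_pos le_rfl, if_neg (lt_irrefl a.2),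
      Pi.one_apply, mul_one, mul_zero]
    ring
  · simp only [if_neg (not_lt.2 hgt.le), if_neg hgt.ne, Set.indicator_apply, mem_Iic, mem_Iio,
      if_pos hgt.le, if_pos hgt, Pi.one_apply, mul_one]
    ring


lemma lemL {μ μ' : Measure Bid} [IsProbabilityMeasure μ] [IsProbabilityMeasure μ']
    (h1 : Measure.map Prod.fst μ = Measure.map Prod.fst μ')
    (h2 : Measure.map Prod.snd μ = Measure.map Prod.snd μ')
    (hmax : ∀ x y : ℝ, μ' {p : Bid | p.1 ≤ x ∧ p.2 ≤ y} =
      min (μ {p : Bid | p.1 ≤ x}) (μ {p : Bid | p.2 ≤ y}))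
    (T : TieRule) (b : Bid) :
    ∫ a, q1 T a b * q2 T a b ∂μ ≤ ∫ a, q1 T a b * q2 T a b ∂μ' := by
  set c := b.1 with hc
  set d := b.2 with hd
  set t := T.t1 b.1 with ht
  set s := T.t2 b.2 with hs
  have ht0 := T.t1_nonneg b.1
  have ht1 := T.t1_le_one b.1
  have hs0 := T.t2_nonneg b.2
  have hs1 := T.t2_le_one b.2
  have rep : ∀ S : Set ℝ, ((∃ e, S = Iic e) ∨ (∃ e, S = Iio e)) →
      ∃ cs : ℕ → ℝ, Monotone cs ∧ S = ⋃ n, Iic (cs n) := by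
    rintro S (⟨e, rfl⟩ | ⟨e, rfl⟩)
    · exact ⟨fun _ => e, monotone_const, Iic_eq_iUnion_const e⟩
    · exact ⟨fun n => e - 1/(n+1), seq_mono e, Iio_eq_iUnion e⟩
  have key : ∀ S₁ S₂ : Set ℝ, ((∃ e, S₁ = Iic e) ∨ (∃ e, S₁ = Iio e)) →
      ((∃ e, S₂ = Iic e) ∨ (∃ e, S₂ = Iio e)) →
      (μ {p : Bid | p.1 ∈ S₁ ∧ p.2 ∈ S₂}).toReal
        ≤ (μ' {p : Bid | p.1 ∈ S₁ ∧ p.2 ∈ S₂}).toReal := by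
    intro S₁ S₂ hS₁ hS₂
    obtain ⟨cs, hcs, e₁⟩ := rep S₁ hS₁
    obtain ⟨ds, hds, e₂⟩ := rep S₂ hS₂
    exact ENNReal.toReal_mono (measure_ne_top μ' _) (frechet_aux hmax hcs hds e₁ e₂)
  have hsplit : ∀ κ : Measure Bid, IsProbabilityMeasure κ →
      ∫ a, q1 T a b * q2 T a b ∂κ
        = 1 - (∫ a : Bid, Fstep c t a.1 ∂κ) - (∫ a : Bid, Fstep d s a.2 ∂κ)
          + ((1-t)*(1-s) * (κ {p : Bid | p.1 ∈ Iic c ∧ p.2 ∈ Iic d}).toReal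
            + (1-t)*s * (κ {p : Bid | p.1 ∈ Iic c ∧ p.2 ∈ Iio d}).toReal
            + t*(1-s) * (κ {p : Bid | p.1 ∈ Iio c ∧ p.2 ∈ Iic d}).toReal
            + t*s * (κ {p : Bid | p.1 ∈ Iio c ∧ p.2 ∈ Iio d}).toReal) := by
    intro κ hκ
    haveI := hκ
    have i1 : Integrable (fun a : Bid => Fstep c t a.1) κ := by
      refine integrable_of_aebdd (((Fstep_meas c t).comp measurable_fst).aestronglyMeasurable)
        (Filter.Eventually.of_forall fun a => abs_le.2 ⟨?_, Fstep_le_one ht0 ht1 a.1⟩)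
      have := Fstep_nonneg (c := c) ht0 ht1 a.1
      linarith
    have i2 : Integrable (fun a : Bid => Fstep d s a.2) κ := by
      refine integrable_of_aebdd (((Fstep_meas d s).comp measurable_snd).aestronglyMeasurable)
        (Filter.Eventually.of_forall fun a => abs_le.2 ⟨?_, Fstep_le_one hs0 hs1 a.2⟩)
      have := Fstep_nonneg (c := d) hs0 hs1 a.2
      linarith
    have iprod : Integrable (fun a : Bid => Fstep c t a.1 * Fstep d s a.2) κ := by
      refine integrable_of_aebdd (C := 1)
        ((((Fstep_meas c t).comp measurable_fst).mul
          ((Fstep_meas d s).comp measurable_snd)).aestronglyMeasurable)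
        (Filter.Eventually.of_forall fun a => abs_le.2 ⟨?_, ?_⟩)
      · nlinarith [Fstep_nonneg (c := c) ht0 ht1 a.1, Fstep_nonneg (c := d) hs0 hs1 a.2]
      · nlinarith [Fstep_nonneg (c := c) ht0 ht1 a.1, Fstep_nonneg (c := d) hs0 hs1 a.2,
          Fstep_le_one (c := c) ht0 ht1 a.1, Fstep_le_one (c := d) hs0 hs1 a.2]
    have iind : ∀ (S₁ S₂ : Set ℝ), MeasurableSet S₁ → MeasurableSet S₂ → ∀ r : ℝ,
        Integrable (fun a : Bid => r * (ind01 S₁ a.1 * ind01 S₂ a.2)) κ := by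
      intro S₁ S₂ m₁ m₂ r
      refine integrable_of_aebdd (C := |r|)
        ((((ind01_meas m₁).comp measurable_fst).mul
          ((ind01_meas m₂).comp measurable_snd)).const_mul r).aestronglyMeasurable
        (Filter.Eventually.of_forall fun a => ?_)
      have hx0 := mul_nonneg (ind01_nonneg S₁ a.1) (ind01_nonneg S₂ a.2)
      have hx1 : ind01 S₁ a.1 * ind01 S₂ a.2 ≤ 1 :=
        mul_le_one₀ (ind01_le_one S₁ a.1) (ind01_nonneg S₂ a.2) (ind01_le_one S₂ a.2)
      calc |r * (ind01 S₁ a.1 * ind01 S₂ a.2)| = |r| * |ind01 S₁ a.1 * ind01 S₂ a.2| :=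
            abs_mul _ _
        _ ≤ |r| * 1 := by
            rw [abs_of_nonneg hx0]
            exact mul_le_mul_of_nonneg_left hx1 (abs_nonneg r)
        _ = |r| := mul_one _
    have hpt : (fun a : Bid => q1 T a b * q2 T a b)
        = fun a : Bid => (1 - Fstep c t a.1 - Fstep d s a.2) + Fstep c t a.1 * Fstep d s a.2 := by
      funext a
      rw [q1_decomp, q2_decomp]
      ring
    have hpt2 : (fun a : Bid => Fstep c t a.1 * Fstep d s a.2)
        = fun a : Bid => ((1-t)*(1-s) * (ind01 (Iic c) a.1 * ind01 (Iic d) a.2)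
          + (1-t)*s * (ind01 (Iic c) a.1 * ind01 (Iio d) a.2))
          + (t*(1-s) * (ind01 (Iio c) a.1 * ind01 (Iic d) a.2)
          + t*s * (ind01 (Iio c) a.1 * ind01 (Iio d) a.2)) := by
      funext a
      unfold Fstep
      ring
    have i1' : Integrable (fun a : Bid => 1 - Fstep c t a.1) κ := (integrable_const 1).sub i1
    have i12 : Integrable (fun a : Bid => 1 - Fstep c t a.1 - Fstep d s a.2) κ := i1'.sub i2
    have j1 := iind (Iic c) (Iic d) measurableSet_Iic measurableSet_Iic ((1-t)*(1-s))
    have j2 := iind (Iic c) (Iio d) measurableSet_Iic measurableSet_Iio ((1-t)*s)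
    have j3 := iind (Iio c) (Iic d) measurableSet_Iio measurableSet_Iic (t*(1-s))
    have j4 := iind (Iio c) (Iio d) measurableSet_Iio measurableSet_Iio (t*s)
    have j12 : Integrable (fun a : Bid => (1-t)*(1-s) * (ind01 (Iic c) a.1 * ind01 (Iic d) a.2)
        + (1-t)*s * (ind01 (Iic c) a.1 * ind01 (Iio d) a.2)) κ := j1.add j2
    have j34 : Integrable (fun a : Bid => t*(1-s) * (ind01 (Iio c) a.1 * ind01 (Iic d) a.2)
        + t*s * (ind01 (Iio c) a.1 * ind01 (Iio d) a.2)) κ := j3.add j4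
    rw [hpt, integral_add i12 iprod,
      integral_sub i1' i2, integral_sub (integrable_const 1) i1,
      integral_const, hpt2,
      integral_add j12 j34, integral_add j1 j2, integral_add j3 j4,
      integral_const_mul, integral_const_mul, integral_const_mul, integral_const_mul,
      integral_ind_mul measurableSet_Iic measurableSet_Iic,
      integral_ind_mul measurableSet_Iic measurableSet_Iio,
      integral_ind_mul measurableSet_Iio measurableSet_Iic,
      integral_ind_mul measurableSet_Iio measurableSet_Iio,
      probReal_univ]
    simp only [ENNReal.toReal_one, smul_eq_mul, one_mul, mul_one]
    ring
  rw [hsplit μ ‹_›, hsplit μ' ‹_›,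
    integral_fst_fun h1 (Fstep_meas c t), integral_snd_fun h2 (Fstep_meas d s)]
  have k1 := key (Iic c) (Iic d) (Or.inl ⟨c, rfl⟩) (Or.inl ⟨d, rfl⟩)
  have k2 := key (Iic c) (Iio d) (Or.inl ⟨c, rfl⟩) (Or.inr ⟨d, rfl⟩)
  have k3 := key (Iio c) (Iic d) (Or.inr ⟨c, rfl⟩) (Or.inl ⟨d, rfl⟩)
  have k4 := key (Iio c) (Iio d) (Or.inr ⟨c, rfl⟩) (Or.inr ⟨d, rfl⟩)
  have c1 : (0:ℝ) ≤ (1-t)*(1-s) := by nlinarith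
  have c2 : (0:ℝ) ≤ (1-t)*s := by nlinarith
  have c3 : (0:ℝ) ≤ t*(1-s) := by nlinarith
  have c4 : (0:ℝ) ≤ t*s := by nlinarith
  have := add_le_add (add_le_add (add_le_add
    (mul_le_mul_of_nonneg_left k1 c1) (mul_le_mul_of_nonneg_left k2 c2))
    (mul_le_mul_of_nonneg_left k3 c3)) (mul_le_mul_of_nonneg_left k4 c4)
  linarith

end Aux

/-- If `(μ,ν)` is a mixed Nash equilibrium and `μ'` is a mixed strategy
with the same marginals as `μ` which is maximally correlated, then `(μ',ν)` is also a
mixed Nash equilibrium with the same utilities, allocation probability and payments. -/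
theorem max_correlated_still_nash (v : ℝ) (hv : 1/2 < v) (T : TieRule)
    (μ μ' ν : Measure Bid) (h : IsNash v T μ ν) (hμ' : IsMixed v μ')
    (h1 : Measure.map Prod.fst μ = Measure.map Prod.fst μ')
    (h2 : Measure.map Prod.snd μ = Measure.map Prod.snd μ')
    (hmax : ∀ x y : ℝ, μ' {p : Bid | p.1 ≤ x ∧ p.2 ≤ y} =
      min (μ {p : Bid | p.1 ≤ x}) (μ {p : Bid | p.2 ≤ y})) :
    IsNash v T μ' ν ∧
    UAnd T μ' ν = UAnd T μ ν ∧
    UOr v T μ' ν = UOr v T μ ν ∧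
    (∫ p, q1 T p.1 p.2 * q2 T p.1 p.2 ∂(μ'.prod ν) =
      ∫ p, q1 T p.1 p.2 * q2 T p.1 p.2 ∂(μ.prod ν)) ∧
    (∫ p, (p.1.1 * q1 T p.1 p.2 + p.1.2 * q2 T p.1 p.2) ∂(μ'.prod ν) =
      ∫ p, (p.1.1 * q1 T p.1 p.2 + p.1.2 * q2 T p.1 p.2) ∂(μ.prod ν)) ∧
    (∫ p, (p.2.1 * (1 - q1 T p.1 p.2) + p.2.2 * (1 - q2 T p.1 p.2)) ∂(μ'.prod ν) =
      ∫ p, (p.2.1 * (1 - q1 T p.1 p.2) + p.2.2 * (1 - q2 T p.1 p.2)) ∂(μ.prod ν)) := by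
  obtain ⟨hμ, hν, hA, hO⟩ := h
  haveI hPμ : IsProbabilityMeasure μ := hμ.1
  haveI hPν : IsProbabilityMeasure ν := hν.1
  haveI hPμ' : IsProbabilityMeasure μ' := hμ'.1
  have hH0 : (0:ℝ) ≤ Hval v := le_trans zero_le_one (le_max_left 1 v)
  have hboxmeas : MeasurableSet (box v) := measurableSet_Icc.prod measurableSet_Icc
  -- a.e. membership of bids in the box
  have haebox1 : ∀ (κ : Measure Bid), IsProbabilityMeasure κ → κ (box v) = 1 →
      (∀ᵐ a ∂κ, a ∈ box v) := by
    intro κ hκ hW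
    haveI := hκ
    refine mem_ae_iff.2 ?_
    show κ (box v)ᶜ = 0
    rw [measure_compl hboxmeas (measure_ne_top _ _), hW, measure_univ, tsub_self]
  have haebox : ∀ (κ : Measure Bid), IsProbabilityMeasure κ → κ (box v) = 1 →
      (∀ᵐ p ∂(κ.prod ν), p.1 ∈ box v ∧ p.2 ∈ box v) := by
    intro κ hκ hW
    haveI := hκ
    refine mem_ae_iff.2 ?_
    have hs : {p : Bid × Bid | p.1 ∈ box v ∧ p.2 ∈ box v} = (box v) ×ˢ (box v) := rfl
    have h1 : (κ.prod ν) {p : Bid × Bid | p.1 ∈ box v ∧ p.2 ∈ box v} = 1 := by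
      rw [hs, Measure.prod_prod, hW, hν.2, one_mul]
    show (κ.prod ν) {p : Bid × Bid | p.1 ∈ box v ∧ p.2 ∈ box v}ᶜ = 0
    rw [measure_compl (by rw [hs]; exact hboxmeas.prod hboxmeas) (measure_ne_top _ _), h1,
      measure_univ, tsub_self]
  -- integrability of the pieces
  have intQ : ∀ (κ : Measure Bid), IsProbabilityMeasure κ →
      Integrable (fun p : Bid × Bid => q1 T p.1 p.2 * q2 T p.1 p.2) (κ.prod ν) := by
    intro κ hκ
    haveI := hκ
    refine integrable_of_aebdd (C := 1) (((meas_q1 T).mul (meas_q2 T)).aestronglyMeasurable)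
      (Filter.Eventually.of_forall fun p => ?_)
    rw [abs_of_nonneg (mul_nonneg (q1_nonneg T _ _) (q2_nonneg T _ _))]
    exact mul_le_one₀ (q1_le_one T _ _) (q2_nonneg T _ _) (q2_le_one T _ _)
  have habs : ∀ x y : ℝ, x ∈ Icc 0 (Hval v) → 0 ≤ y → y ≤ 1 → |x * y| ≤ Hval v := by
    rintro x y ⟨hx0, hx1⟩ hy0 hy1
    rw [abs_of_nonneg (mul_nonneg hx0 hy0)]
    nlinarith
  have hmemIcc : ∀ (p : Bid × Bid), p.1 ∈ box v ∧ p.2 ∈ box v →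
      p.1.1 ∈ Icc 0 (Hval v) ∧ p.1.2 ∈ Icc 0 (Hval v) ∧ p.2.1 ∈ Icc 0 (Hval v)
        ∧ p.2.2 ∈ Icc 0 (Hval v) := by
    intro p hp
    exact ⟨hp.1.1, hp.1.2, hp.2.1, hp.2.2⟩
  have intA1 : ∀ (κ : Measure Bid), IsProbabilityMeasure κ → κ (box v) = 1 →
      Integrable (fun p : Bid × Bid => p.1.1 * q1 T p.1 p.2) (κ.prod ν) := by
    intro κ hκ hW
    haveI := hκ
    refine integrable_of_aebdd (C := Hval v)
      (((measurable_fst.comp measurable_fst).mul (meas_q1 T)).aestronglyMeasurable) ?_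
    filter_upwards [haebox κ hκ hW] with p hp
    exact habs _ _ (hmemIcc p hp).1 (q1_nonneg T _ _) (q1_le_one T _ _)
  have intA2 : ∀ (κ : Measure Bid), IsProbabilityMeasure κ → κ (box v) = 1 →
      Integrable (fun p : Bid × Bid => p.1.2 * q2 T p.1 p.2) (κ.prod ν) := by
    intro κ hκ hW
    haveI := hκ
    refine integrable_of_aebdd (C := Hval v)
      (((measurable_snd.comp measurable_fst).mul (meas_q2 T)).aestronglyMeasurable) ?_
    filter_upwards [haebox κ hκ hW] with p hp
    exact habs _ _ (hmemIcc p hp).2.1 (q2_nonneg T _ _) (q2_le_one T _ _)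
  have intP1 : ∀ (κ : Measure Bid), IsProbabilityMeasure κ → κ (box v) = 1 →
      Integrable (fun p : Bid × Bid => p.2.1 * (1 - q1 T p.1 p.2)) (κ.prod ν) := by
    intro κ hκ hW
    haveI := hκ
    refine integrable_of_aebdd (C := Hval v)
      (((measurable_fst.comp measurable_snd).mul
        (measurable_const.sub (meas_q1 T))).aestronglyMeasurable) ?_
    filter_upwards [haebox κ hκ hW] with p hp
    refine habs _ _ (hmemIcc p hp).2.2.1 ?_ ?_
    · have := q1_le_one T p.1 p.2; linarith
    · have := q1_nonneg T p.1 p.2; linarith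
  have intP2 : ∀ (κ : Measure Bid), IsProbabilityMeasure κ → κ (box v) = 1 →
      Integrable (fun p : Bid × Bid => p.2.2 * (1 - q2 T p.1 p.2)) (κ.prod ν) := by
    intro κ hκ hW
    haveI := hκ
    refine integrable_of_aebdd (C := Hval v)
      (((measurable_snd.comp measurable_snd).mul
        (measurable_const.sub (meas_q2 T))).aestronglyMeasurable) ?_
    filter_upwards [haebox κ hκ hW] with p hp
    refine habs _ _ (hmemIcc p hp).2.2.2 ?_ ?_
    · have := q2_le_one T p.1 p.2; linarith
    · have := q2_nonneg T p.1 p.2; linarith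
  -- the marginal-only integrals agree
  have eA1 : ∫ p, p.1.1 * q1 T p.1 p.2 ∂(μ.prod ν) = ∫ p, p.1.1 * q1 T p.1 p.2 ∂(μ'.prod ν) := by
    have hφ : Measurable (fun z : ℝ × Bid => z.1 * q1 T (z.1, 0) z.2) :=
      measurable_fst.mul ((meas_q1 T).comp
        ((measurable_fst.prodMk measurable_const).prodMk measurable_snd))
    calc ∫ p, p.1.1 * q1 T p.1 p.2 ∂(μ.prod ν)
        = ∫ p : Bid × Bid, (fun z : ℝ × Bid => z.1 * q1 T (z.1, 0) z.2) (p.1.1, p.2)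
            ∂(μ.prod ν) := rfl
      _ = ∫ z, (fun z : ℝ × Bid => z.1 * q1 T (z.1, 0) z.2) z
            ∂((Measure.map Prod.fst μ).prod ν) := integral_map_fst_prod hφ
      _ = ∫ z, (fun z : ℝ × Bid => z.1 * q1 T (z.1, 0) z.2) z
            ∂((Measure.map Prod.fst μ').prod ν) := by rw [h1]
      _ = ∫ p : Bid × Bid, (fun z : ℝ × Bid => z.1 * q1 T (z.1, 0) z.2) (p.1.1, p.2)
            ∂(μ'.prod ν) := (integral_map_fst_prod hφ).symm
      _ = ∫ p, p.1.1 * q1 T p.1 p.2 ∂(μ'.prod ν) := rfl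
  have eA2 : ∫ p, p.1.2 * q2 T p.1 p.2 ∂(μ.prod ν) = ∫ p, p.1.2 * q2 T p.1 p.2 ∂(μ'.prod ν) := by
    have hφ : Measurable (fun z : ℝ × Bid => z.1 * q2 T (0, z.1) z.2) :=
      measurable_fst.mul ((meas_q2 T).comp
        ((measurable_const.prodMk measurable_fst).prodMk measurable_snd))
    calc ∫ p, p.1.2 * q2 T p.1 p.2 ∂(μ.prod ν)
        = ∫ p : Bid × Bid, (fun z : ℝ × Bid => z.1 * q2 T (0, z.1) z.2) (p.1.2, p.2)
            ∂(μ.prod ν) := rfl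
      _ = ∫ z, (fun z : ℝ × Bid => z.1 * q2 T (0, z.1) z.2) z
            ∂((Measure.map Prod.snd μ).prod ν) := integral_map_snd_prod hφ
      _ = ∫ z, (fun z : ℝ × Bid => z.1 * q2 T (0, z.1) z.2) z
            ∂((Measure.map Prod.snd μ').prod ν) := by rw [h2]
      _ = ∫ p : Bid × Bid, (fun z : ℝ × Bid => z.1 * q2 T (0, z.1) z.2) (p.1.2, p.2)
            ∂(μ'.prod ν) := (integral_map_snd_prod hφ).symm
      _ = ∫ p, p.1.2 * q2 T p.1 p.2 ∂(μ'.prod ν) := rfl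
  have eP1 : ∫ p, p.2.1 * (1 - q1 T p.1 p.2) ∂(μ.prod ν)
      = ∫ p, p.2.1 * (1 - q1 T p.1 p.2) ∂(μ'.prod ν) := by
    have hφ : Measurable (fun z : ℝ × Bid => z.2.1 * (1 - q1 T (z.1, 0) z.2)) :=
      (measurable_fst.comp measurable_snd).mul (measurable_const.sub ((meas_q1 T).comp
        ((measurable_fst.prodMk measurable_const).prodMk measurable_snd)))
    calc ∫ p, p.2.1 * (1 - q1 T p.1 p.2) ∂(μ.prod ν)
        = ∫ p : Bid × Bid, (fun z : ℝ × Bid => z.2.1 * (1 - q1 T (z.1, 0) z.2)) (p.1.1, p.2)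
            ∂(μ.prod ν) := rfl
      _ = ∫ z, (fun z : ℝ × Bid => z.2.1 * (1 - q1 T (z.1, 0) z.2)) z
            ∂((Measure.map Prod.fst μ).prod ν) := integral_map_fst_prod hφ
      _ = ∫ z, (fun z : ℝ × Bid => z.2.1 * (1 - q1 T (z.1, 0) z.2)) z
            ∂((Measure.map Prod.fst μ').prod ν) := by rw [h1]
      _ = ∫ p : Bid × Bid, (fun z : ℝ × Bid => z.2.1 * (1 - q1 T (z.1, 0) z.2)) (p.1.1, p.2)
            ∂(μ'.prod ν) := (integral_map_fst_prod hφ).symm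
      _ = ∫ p, p.2.1 * (1 - q1 T p.1 p.2) ∂(μ'.prod ν) := rfl
  have eP2 : ∫ p, p.2.2 * (1 - q2 T p.1 p.2) ∂(μ.prod ν)
      = ∫ p, p.2.2 * (1 - q2 T p.1 p.2) ∂(μ'.prod ν) := by
    have hφ : Measurable (fun z : ℝ × Bid => z.2.2 * (1 - q2 T (0, z.1) z.2)) :=
      (measurable_snd.comp measurable_snd).mul (measurable_const.sub ((meas_q2 T).comp
        ((measurable_const.prodMk measurable_fst).prodMk measurable_snd)))
    calc ∫ p, p.2.2 * (1 - q2 T p.1 p.2) ∂(μ.prod ν)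
        = ∫ p : Bid × Bid, (fun z : ℝ × Bid => z.2.2 * (1 - q2 T (0, z.1) z.2)) (p.1.2, p.2)
            ∂(μ.prod ν) := rfl
      _ = ∫ z, (fun z : ℝ × Bid => z.2.2 * (1 - q2 T (0, z.1) z.2)) z
            ∂((Measure.map Prod.snd μ).prod ν) := integral_map_snd_prod hφ
      _ = ∫ z, (fun z : ℝ × Bid => z.2.2 * (1 - q2 T (0, z.1) z.2)) z
            ∂((Measure.map Prod.snd μ').prod ν) := by rw [h2]
      _ = ∫ p : Bid × Bid, (fun z : ℝ × Bid => z.2.2 * (1 - q2 T (0, z.1) z.2)) (p.1.2, p.2)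
            ∂(μ'.prod ν) := (integral_map_snd_prod hφ).symm
      _ = ∫ p, p.2.2 * (1 - q2 T p.1 p.2) ∂(μ'.prod ν) := rfl
  -- the allocation integral only goes up
  have eQle : ∫ p, q1 T p.1 p.2 * q2 T p.1 p.2 ∂(μ.prod ν)
      ≤ ∫ p, q1 T p.1 p.2 * q2 T p.1 p.2 ∂(μ'.prod ν) := by
    rw [integral_prod_symm _ (intQ μ hPμ), integral_prod_symm _ (intQ μ' hPμ')]
    exact integral_mono (intQ μ hPμ).integral_prod_right (intQ μ' hPμ').integral_prod_right
      fun b => lemL h1 h2 hmax T b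
  -- decomposition of UAnd and UOr
  have hUA : ∀ (κ : Measure Bid), IsProbabilityMeasure κ → κ (box v) = 1 →
      UAnd T κ ν = (∫ p, q1 T p.1 p.2 * q2 T p.1 p.2 ∂(κ.prod ν))
        - (∫ p, p.1.1 * q1 T p.1 p.2 ∂(κ.prod ν)) - (∫ p, p.1.2 * q2 T p.1 p.2 ∂(κ.prod ν)) := by
    intro κ hκ hW
    haveI := hκ
    have iQA1 : Integrable
        (fun p : Bid × Bid => q1 T p.1 p.2 * q2 T p.1 p.2 - p.1.1 * q1 T p.1 p.2) (κ.prod ν) :=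
      (intQ κ hκ).sub (intA1 κ hκ hW)
    simp only [UAnd, uAnd]
    rw [integral_sub iQA1 (intA2 κ hκ hW), integral_sub (intQ κ hκ) (intA1 κ hκ hW)]
  have hUO : ∀ (κ : Measure Bid), IsProbabilityMeasure κ → κ (box v) = 1 →
      UOr v T κ ν = v - v * (∫ p, q1 T p.1 p.2 * q2 T p.1 p.2 ∂(κ.prod ν))
        - (∫ p, p.2.1 * (1 - q1 T p.1 p.2) ∂(κ.prod ν))
        - (∫ p, p.2.2 * (1 - q2 T p.1 p.2) ∂(κ.prod ν)) := by
    intro κ hκ hW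
    haveI := hκ
    have hpt : (fun p : Bid × Bid => uOr v T p.1 p.2)
        = fun p : Bid × Bid => (v - v * (q1 T p.1 p.2 * q2 T p.1 p.2))
          - p.2.1 * (1 - q1 T p.1 p.2) - p.2.2 * (1 - q2 T p.1 p.2) := by
      funext p
      simp only [uOr]
      ring
    have ivq : Integrable (fun p : Bid × Bid => v - v * (q1 T p.1 p.2 * q2 T p.1 p.2))
        (κ.prod ν) := (integrable_const v).sub ((intQ κ hκ).const_mul v)
    have ivq1 : Integrable (fun p : Bid × Bid => (v - v * (q1 T p.1 p.2 * q2 T p.1 p.2))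
        - p.2.1 * (1 - q1 T p.1 p.2)) (κ.prod ν) := ivq.sub (intP1 κ hκ hW)
    simp only [UOr]
    rw [hpt, integral_sub ivq1 (intP2 κ hκ hW), integral_sub ivq (intP1 κ hκ hW),
      integral_sub (integrable_const v) ((intQ κ hκ).const_mul v), integral_const,
      integral_const_mul, probReal_univ, one_smul]
  -- equilibrium squeeze for the AND player
  have iU : ∀ (κ : Measure Bid), IsProbabilityMeasure κ → κ (box v) = 1 →
      Integrable (fun p : Bid × Bid => uAnd T p.1 p.2) (κ.prod ν) := by
    intro κ hκ hW
    haveI := hκ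
    have : Integrable (fun p : Bid × Bid => q1 T p.1 p.2 * q2 T p.1 p.2
        - p.1.1 * q1 T p.1 p.2 - p.1.2 * q2 T p.1 p.2) (κ.prod ν) :=
      ((intQ κ hκ).sub (intA1 κ hκ hW)).sub (intA2 κ hκ hW)
    exact this
  have hUAle : UAnd T μ' ν ≤ UAnd T μ ν := by
    have hrepr : UAnd T μ' ν = ∫ a, (∫ b, uAnd T a b ∂ν) ∂μ' :=
      integral_prod _ (iU μ' hPμ' hμ'.2)
    rw [hrepr]
    calc ∫ a, (∫ b, uAnd T a b ∂ν) ∂μ'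
        ≤ ∫ _a : Bid, UAnd T μ ν ∂μ' := by
          refine integral_mono_ae (iU μ' hPμ' hμ'.2).integral_prod_left (integrable_const _) ?_
          filter_upwards [haebox1 μ' hPμ' hμ'.2] with a ha
          exact hA a ha
      _ = UAnd T μ ν := by
          rw [integral_const, probReal_univ, one_smul]
  have hUAge : UAnd T μ ν ≤ UAnd T μ' ν := by
    rw [hUA μ hPμ hμ.2, hUA μ' hPμ' hμ'.2, ← eA1, ← eA2]
    linarith
  have hUAeq : UAnd T μ' ν = UAnd T μ ν := le_antisymm hUAle hUAge
  have hQeq : ∫ p, q1 T p.1 p.2 * q2 T p.1 p.2 ∂(μ'.prod ν)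
      = ∫ p, q1 T p.1 p.2 * q2 T p.1 p.2 ∂(μ.prod ν) := by
    have e1 := hUA μ hPμ hμ.2
    have e2 := hUA μ' hPμ' hμ'.2
    rw [hUAeq] at e2
    rw [← eA1, ← eA2] at e2
    linarith
  have hUOeq : UOr v T μ' ν = UOr v T μ ν := by
    rw [hUO μ hPμ hμ.2, hUO μ' hPμ' hμ'.2, hQeq, eP1, eP2]
  -- OR deviations against μ'
  have hORdev : ∀ b ∈ box v, (∫ a, uOr v T a b ∂μ') ≤ UOr v T μ' ν := by
    intro b hb
    have hdec : ∀ (κ : Measure Bid), IsProbabilityMeasure κ →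
        ∫ a, uOr v T a b ∂κ = v - v * (∫ a, q1 T a b * q2 T a b ∂κ)
          - (∫ a : Bid, (fun x : ℝ => b.1 * (1 - q1 T (x, 0) b)) a.1 ∂κ)
          - (∫ a : Bid, (fun y : ℝ => b.2 * (1 - q2 T (0, y) b)) a.2 ∂κ) := by
      intro κ hκ
      haveI := hκ
      have mq : Measurable (fun a : Bid => q1 T a b * q2 T a b) :=
        ((meas_q1 T).comp (measurable_id.prodMk measurable_const)).mul
          ((meas_q2 T).comp (measurable_id.prodMk measurable_const))
      have iq : Integrable (fun a : Bid => q1 T a b * q2 T a b) κ := by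
        refine integrable_of_aebdd (C := 1) mq.aestronglyMeasurable
          (Filter.Eventually.of_forall fun a => ?_)
        rw [abs_of_nonneg (mul_nonneg (q1_nonneg T _ _) (q2_nonneg T _ _))]
        exact mul_le_one₀ (q1_le_one T _ _) (q2_nonneg T _ _) (q2_le_one T _ _)
      have ip1 : Integrable (fun a : Bid => b.1 * (1 - q1 T a b)) κ := by
        refine integrable_of_aebdd (C := |b.1|)
          ((measurable_const.mul (measurable_const.sub
            ((meas_q1 T).comp (measurable_id.prodMk measurable_const)))).aestronglyMeasurable)
          (Filter.Eventually.of_forall fun a => ?_)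
        rw [abs_mul]
        have h1 := q1_nonneg T a b
        have h2 := q1_le_one T a b
        have : |1 - q1 T a b| ≤ 1 := by rw [abs_of_nonneg (by linarith)]; linarith
        nlinarith [abs_nonneg b.1]
      have ip2 : Integrable (fun a : Bid => b.2 * (1 - q2 T a b)) κ := by
        refine integrable_of_aebdd (C := |b.2|)
          ((measurable_const.mul (measurable_const.sub
            ((meas_q2 T).comp (measurable_id.prodMk measurable_const)))).aestronglyMeasurable)
          (Filter.Eventually.of_forall fun a => ?_)
        rw [abs_mul]
        have h1 := q2_nonneg T a b
        have h2 := q2_le_one T a b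
        have : |1 - q2 T a b| ≤ 1 := by rw [abs_of_nonneg (by linarith)]; linarith
        nlinarith [abs_nonneg b.2]
      have hpt : (fun a : Bid => uOr v T a b) = fun a : Bid =>
          (v - v * (q1 T a b * q2 T a b)) - b.1 * (1 - q1 T a b) - b.2 * (1 - q2 T a b) := by
        funext a
        simp only [uOr]
        ring
      have ivq : Integrable (fun a : Bid => v - v * (q1 T a b * q2 T a b)) κ :=
        (integrable_const v).sub (iq.const_mul v)
      have ivq1 : Integrable (fun a : Bid => (v - v * (q1 T a b * q2 T a b))
          - b.1 * (1 - q1 T a b)) κ := ivq.sub ip1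
      rw [hpt, integral_sub ivq1 ip2, integral_sub ivq ip1,
        integral_sub (integrable_const v) (iq.const_mul v), integral_const,
        integral_const_mul, probReal_univ, one_smul]
      rfl
    have hle : ∫ a, uOr v T a b ∂μ' ≤ ∫ a, uOr v T a b ∂μ := by
      rw [hdec μ hPμ, hdec μ' hPμ']
      have hq := lemL h1 h2 hmax T b
      have hp1 := integral_fst_fun (μ := μ) (μ' := μ') h1
        (f := fun x : ℝ => b.1 * (1 - q1 T (x, 0) b))
        (measurable_const.mul (measurable_const.sub ((meas_q1 T).comp
          ((measurable_id.prodMk measurable_const).prodMk measurable_const))))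
      have hp2 := integral_snd_fun (μ := μ) (μ' := μ') h2
        (f := fun y : ℝ => b.2 * (1 - q2 T (0, y) b))
        (measurable_const.mul (measurable_const.sub ((meas_q2 T).comp
          ((measurable_const.prodMk measurable_id).prodMk measurable_const))))
      rw [← hp1, ← hp2]
      have hv0 : (0:ℝ) ≤ v := by linarith
      nlinarith
    exact hle.trans ((hO b hb).trans_eq hUOeq.symm)
  -- assemble everything
  refine ⟨⟨hμ', hν, fun a ha => (hA a ha).trans_eq hUAeq.symm, hORdev⟩, hUAeq, hUOeq, hQeq, ?_, ?_⟩
  · rw [integral_add (intA1 μ' hPμ' hμ'.2) (intA2 μ' hPμ' hμ'.2),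
      integral_add (intA1 μ hPμ hμ.2) (intA2 μ hPμ hμ.2), eA1, eA2]
  · rw [integral_add (intP1 μ' hPμ' hμ'.2) (intP2 μ' hPμ' hμ'.2),
      integral_add (intP1 μ hPμ hμ.2) (intP2 μ hPμ hμ.2), eP1, eP2]
end
end

section
/- The probability that the AND player wins both items in the equilibrium (μ*, ν*) satisfies: (i) for every real v > 1/2 with v ≠ 1, ∫ x in (0)..(1/2), ((v − 1/2)/(v − x)^2)·(x/(1 − x)) dx = ((v − 1/2)·Real.log (2 − 1/v) − (v − 1)/2)/(v − 1)^2; (ii) for v = 1, ∫ x in (0)..(1/2), x/(2·(1 − x)^3) dx = 1/4; and (iii) Filter.Tendsto (fun v : ℝ => v · ∫ x in (0)..(1/2), ((v − 1/2)/(v − x)^2)·(x/(1 − x)) dx) Filter.atTop (nhds (Real.log 2 − 1/2)). -/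
open MeasureTheory Set
open scoped ENNReal

noncomputable section

lemma part1 (v : ℝ) (hv : 1/2 < v) (hv1 : v ≠ 1) :
    ∫ x in (0:ℝ)..(1/2), ((v - 1/2)/(v - x)^2) * (x/(1 - x)) =
      ((v - 1/2) * Real.log (2 - 1/v) - (v - 1)/2)/(v - 1)^2 := by
  have hv0 : (0:ℝ) < v := by linarith
  have hvne : v - 1 ≠ 0 := sub_ne_zero.mpr hv1
  have h2 : v - (1:ℝ)/2 ≠ 0 := by intro h; linarith [sub_eq_zero.mp h]
  set F : ℝ → ℝ := fun x =>
    (v - 1/2) * ((Real.log (v - x) - Real.log (1 - x))/(v - 1)^2 - v * ((v - 1)*(v - x))⁻¹)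
    with hF
  have key : ∀ x ∈ Set.uIcc (0:ℝ) (1/2),
      HasDerivAt F (((v - 1/2)/(v - x)^2) * (x/(1 - x))) x := by
    intro x hx
    rw [Set.uIcc_of_le (by norm_num : (0:ℝ) ≤ 1/2)] at hx
    obtain ⟨hx0, hx1⟩ := hx
    have hvx : (0:ℝ) < v - x := by linarith
    have h1x : (0:ℝ) < 1 - x := by linarith
    have d1 : HasDerivAt (fun x : ℝ => v - x) (-1) x := by
      simpa using (hasDerivAt_id x).const_sub v
    have d2 : HasDerivAt (fun x : ℝ => 1 - x) (-1) x := by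
      simpa using (hasDerivAt_id x).const_sub 1
    have dlog1 : HasDerivAt (fun x : ℝ => Real.log (v - x)) ((v - x)⁻¹ * (-1)) x :=
      (Real.hasDerivAt_log hvx.ne').comp x d1
    have dlog2 : HasDerivAt (fun x : ℝ => Real.log (1 - x)) ((1 - x)⁻¹ * (-1)) x :=
      (Real.hasDerivAt_log h1x.ne').comp x d2
    have hne : (v - 1)*(v - x) ≠ 0 := mul_ne_zero hvne hvx.ne'
    have dinv : HasDerivAt (fun x : ℝ => v * ((v - 1)*(v - x))⁻¹)
        (v * (-((v - 1) * -1) / ((v - 1)*(v - x))^2)) x :=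
      ((d1.const_mul (v - 1)).inv hne).const_mul v
    have hD := (((dlog1.sub dlog2).div_const ((v - 1)^2)).sub dinv).const_mul (v - 1/2)
    refine hD.congr_deriv ?_
    rw [mul_pow]
    field_simp
    ring
  have hint : IntervalIntegrable (fun x => ((v - 1/2)/(v - x)^2) * (x/(1 - x)))
      volume 0 (1/2) := by
    apply ContinuousOn.intervalIntegrable
    apply ContinuousOn.mul
    · apply ContinuousOn.div continuousOn_const (by fun_prop)
      intro x hx
      rw [Set.uIcc_of_le (by norm_num : (0:ℝ) ≤ 1/2)] at hx
      have : (0:ℝ) < v - x := by obtain ⟨h, h'⟩ := hx; linarith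
      positivity
    · apply ContinuousOn.div (by fun_prop) (by fun_prop)
      intro x hx
      rw [Set.uIcc_of_le (by norm_num : (0:ℝ) ≤ 1/2)] at hx
      have : (0:ℝ) < 1 - x := by obtain ⟨h, h'⟩ := hx; linarith
      linarith
  rw [intervalIntegral.integral_eq_sub_of_hasDerivAt key hint]
  have hlog : Real.log (2 - 1/v) = Real.log (v - 1/2) - Real.log (1/2) - Real.log v := by
    have h1 : (2 - 1/v) = (v - 1/2) / ((1/2) * v) := by field_simp
    rw [h1, Real.log_div (by linarith) (by positivity),
      Real.log_mul (by norm_num) hv0.ne']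
    ring
  rw [hlog, hF]
  simp only [sub_zero, Real.log_one, show ((1:ℝ) - 1/2) = 1/2 from by norm_num]
  have e1 : v * ((v - 1)*(v - (1/2:ℝ)))⁻¹ = 2/(v-1) - 1/(v-1/2) := by
    rw [← div_eq_mul_inv, div_sub_div _ _ hvne h2]
    congr 1
    ring
  have e2 : v * ((v - 1)*v)⁻¹ = 1/(v-1) := by
    rw [mul_inv]; field_simp
  have key2 : (v-1/2) * (v * ((v - 1)*(v - (1/2:ℝ)))⁻¹ - v * ((v - 1)*v)⁻¹)
      = ((v-1)/2)/(v-1)^2 := by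
    rw [e1, e2,
      show 2/(v-1) - 1/(v-1/2) - 1/(v-1) = 1/(v-1) - 1/(v-1/2) by ring,
      div_sub_div _ _ hvne h2, mul_div_assoc',
      div_eq_div_iff (mul_ne_zero hvne h2) (pow_ne_zero 2 hvne)]
    ring
  linear_combination -key2

lemma part2 : ∫ x in (0:ℝ)..(1/2), x/(2*(1 - x)^3) = 1/4 := by
  set F : ℝ → ℝ := fun x => 1/(4*(1-x)^2) - 1/(2*(1-x)) with hF
  have key : ∀ x ∈ Set.uIcc (0:ℝ) (1/2),
      HasDerivAt F (x/(2*(1 - x)^3)) x := by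
    intro x hx
    rw [Set.uIcc_of_le (by norm_num : (0:ℝ) ≤ 1/2)] at hx
    obtain ⟨hx0, hx1⟩ := hx
    have h1x : (0:ℝ) < 1 - x := by linarith
    have d2 : HasDerivAt (fun x : ℝ => 1 - x) (-1) x := by
      simpa using (hasDerivAt_id x).const_sub 1
    have dA : HasDerivAt (fun x : ℝ => 4*(1-x)^2) (4*(2*(1-x)^1*(-1))) x :=
      (d2.pow 2).const_mul 4
    have dB : HasDerivAt (fun x : ℝ => 2*(1-x)) (2*(-1)) x := d2.const_mul 2
    have hA : 4*(1-x)^2 ≠ 0 := by positivity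
    have hB : 2*(1-x) ≠ 0 := by positivity
    have hD := ((dA.inv hA).const_mul 1).sub ((dB.inv hB).const_mul 1)
    have heq : ∀ y : ℝ, 1 * (4*(1-y)^2)⁻¹ - 1 * (2*(1-y))⁻¹ = F y := by
      intro y; rw [hF]; simp [one_div]
    refine HasDerivAt.congr_deriv (hD.congr_of_eventuallyEq ?_) ?_
    · filter_upwards with y using (heq y).symm
    · field_simp
      ring
  have hint : IntervalIntegrable (fun x => x/(2*(1 - x)^3)) volume 0 (1/2) := by
    apply ContinuousOn.intervalIntegrable
    apply ContinuousOn.div (by fun_prop) (by fun_prop)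
    intro x hx
    rw [Set.uIcc_of_le (by norm_num : (0:ℝ) ≤ 1/2)] at hx
    have : (0:ℝ) < 1 - x := by obtain ⟨h, h'⟩ := hx; linarith
    positivity
  rw [intervalIntegral.integral_eq_sub_of_hasDerivAt key hint]
  rw [hF]
  norm_num


lemma part3 : Filter.Tendsto
    (fun v : ℝ => v * ∫ x in (0:ℝ)..(1/2), ((v - 1/2)/(v - x)^2) * (x/(1 - x)))
    Filter.atTop (nhds (Real.log 2 - 1/2)) := by
  set φ : ℝ → ℝ := fun t => (1 - t/2)/(1 - t)^2 * Real.log (2 - t) - 1/(2*(1 - t)) with hφ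
  have hcont : ContinuousAt φ 0 := by
    apply ContinuousAt.sub
    · exact ((continuousAt_const.sub (continuousAt_id.div_const 2)).div
        (by fun_prop) (by norm_num)).mul
        ((Real.continuousAt_log (by norm_num)).comp
          (continuousAt_const.sub continuousAt_id))
    · exact continuousAt_const.div (by fun_prop) (by norm_num)
  have h0 : φ 0 = Real.log 2 - 1/2 := by rw [hφ]; norm_num
  have hmain : Filter.Tendsto (fun v : ℝ => φ v⁻¹) Filter.atTop (nhds (Real.log 2 - 1/2)) := by
    rw [← h0]
    exact hcont.tendsto.comp tendsto_inv_atTop_zero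
  apply hmain.congr'
  filter_upwards [Filter.eventually_gt_atTop (1:ℝ)] with v hv1
  have hv0 : (0:ℝ) < v := by linarith
  have hvne : v - 1 ≠ 0 := by intro h; nlinarith [sub_eq_zero.mp h]
  have htne : 1 - v⁻¹ ≠ 0 := by
    have : v⁻¹ < 1 := by rw [inv_lt_one_iff₀]; right; exact hv1
    intro h; nlinarith [sub_eq_zero.mp h]
  have c1 : (1 - v⁻¹/2)/(1 - v⁻¹)^2 = (v*(v - 1/2))/(v-1)^2 := by
    have h2 : (1:ℝ) - v⁻¹/2 = (v - 1/2)/v := by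
      rw [eq_div_iff hv0.ne', sub_mul, div_mul_eq_mul_div, inv_mul_cancel₀ hv0.ne']
      ring
    rw [show (1:ℝ) - v⁻¹ = (v-1)/v from by field_simp, h2, div_pow, div_div_eq_mul_div,
      div_mul_eq_mul_div, div_div]
    rw [div_eq_div_iff (by positivity) (pow_ne_zero 2 hvne)]
    ring
  have c2 : 1/(2*(1 - v⁻¹)) = (v*((v-1)/2))/(v-1)^2 := by
    rw [show (1:ℝ) - v⁻¹ = (v-1)/v from by field_simp, mul_div_assoc', one_div_div]
    rw [div_eq_div_iff (by intro h; exact hvne (by nlinarith [h])) (pow_ne_zero 2 hvne)]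
    ring
  rw [part1 v (by linarith) (by intro h; rw [h] at hv1; exact lt_irrefl 1 hv1), hφ]
  simp only [one_div v]
  rw [c1, c2]
  ring

/-- The probability that AND wins both items in the equilibrium
`(μ*, ν*)`: closed form for `v ≠ 1`, value `1/4` at `v = 1`, and asymptotics
`(ln 2 - 1/2)/v` as `v → ∞`. -/
theorem prob_and_wins :
    (∀ v : ℝ, 1/2 < v → v ≠ 1 →
      ∫ x in (0:ℝ)..(1/2), ((v - 1/2)/(v - x)^2) * (x/(1 - x)) =
        ((v - 1/2) * Real.log (2 - 1/v) - (v - 1)/2)/(v - 1)^2) ∧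
    (∫ x in (0:ℝ)..(1/2), x/(2*(1 - x)^3) = 1/4) ∧
    Filter.Tendsto
      (fun v : ℝ => v * ∫ x in (0:ℝ)..(1/2), ((v - 1/2)/(v - x)^2) * (x/(1 - x)))
      Filter.atTop (nhds (Real.log 2 - 1/2)) := by
  exact ⟨fun v hv hv1 => part1 v hv hv1, part2, part3⟩
end
end

section
/- The expected revenue from the OR player in the equilibrium (μ*, ν*) satisfies: (i) for every real v > 1/2 with v ≠ 1, ∫ x in (0)..(1/2), (x/(1 − x)^2)·((v − 1/2)/(v − x)) dx = ((v − 1/2)/(v − 1)^2)·(v − 1 − v·Real.log 2 + v·Real.log (v/(v − 1/2))); (ii) for v = 1, this integral equals 1/4; and (iii) Filter.Tendsto (fun v : ℝ => ∫ x in (0)..(1/2), (x/(1 − x)^2)·((v − 1/2)/(v − x)) dx) Filter.atTop (nhds (1 − Real.log 2)). -/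
open MeasureTheory Set
open scoped ENNReal

noncomputable section

lemma rev_closed_form (v : ℝ) (hv : 1/2 < v) (hv1 : v ≠ 1) :
    ∫ x in (0:ℝ)..(1/2), (x/(1 - x)^2) * ((v - 1/2)/(v - x)) =
      ((v - 1/2)/(v - 1)^2) *
        (v - 1 - v * Real.log 2 + v * Real.log (v/(v - 1/2))) := by
  have hv0 : (0:ℝ) < v := by linarith
  have hvm : (0:ℝ) < v - 1/2 := by linarith
  have hv1' : v - 1 ≠ 0 := sub_ne_zero.mpr hv1
  set F : ℝ → ℝ := fun x => (v-1/2) * (v/(v-1)^2 * Real.log (1-x)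
      + 1/((v-1)*(1-x)) - v/(v-1)^2 * Real.log (v-x)) with hF
  have key : ∀ x ∈ Set.uIcc (0:ℝ) (1/2),
      HasDerivAt F ((x/(1 - x)^2) * ((v - 1/2)/(v - x))) x := by
    intro x hx
    rw [Set.uIcc_of_le (by norm_num)] at hx
    have h1 : (0:ℝ) < 1 - x := by linarith [hx.2]
    have h1' : (1:ℝ) - x ≠ 0 := ne_of_gt h1
    have h2 : (0:ℝ) < v - x := by linarith [hx.2]
    have h2' : v - x ≠ 0 := ne_of_gt h2
    have d1 : HasDerivAt (fun y : ℝ => 1 - y) (-1) x := (hasDerivAt_id x).const_sub 1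
    have d2 : HasDerivAt (fun y : ℝ => v - y) (-1) x := (hasDerivAt_id x).const_sub v
    have dlog1 : HasDerivAt (fun y : ℝ => Real.log (1 - y)) ((1-x)⁻¹ * (-1)) x :=
      (Real.hasDerivAt_log h1').comp x d1
    have dlog2 : HasDerivAt (fun y : ℝ => Real.log (v - y)) ((v-x)⁻¹ * (-1)) x :=
      (Real.hasDerivAt_log h2').comp x d2
    have dinv : HasDerivAt (fun y : ℝ => 1/((v-1)*(1-y)))
        (-((v-1) * (-1)) / ((v-1)*(1-x))^2) x := by
      have : HasDerivAt (fun y : ℝ => (v-1)*(1-y)) ((v-1)*(-1)) x := d1.const_mul (v-1)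
      exact (this.inv (by
        exact mul_ne_zero hv1' h1')).congr_of_eventuallyEq
          (Filter.Eventually.of_forall fun y => one_div _)
    have := ((((dlog1.const_mul (v/(v-1)^2)).add dinv).sub
        (dlog2.const_mul (v/(v-1)^2))).const_mul (v-1/2))
    refine HasDerivAt.congr_deriv this ?_
    field_simp
    ring
  have hint : IntervalIntegrable (fun x => (x/(1 - x)^2) * ((v - 1/2)/(v - x)))
      volume 0 (1/2) := by
    apply ContinuousOn.intervalIntegrable
    apply ContinuousOn.mul
    · apply ContinuousOn.div continuousOn_id
      · fun_prop
      · intro x hx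
        rw [Set.uIcc_of_le (by norm_num)] at hx
        have : (0:ℝ) < 1 - x := by linarith [hx.2]
        positivity
    · apply ContinuousOn.div continuousOn_const (by fun_prop)
      intro x hx
      rw [Set.uIcc_of_le (by norm_num)] at hx
      have : (0:ℝ) < v - x := by linarith [hx.2]
      exact ne_of_gt this
  rw [intervalIntegral.integral_eq_sub_of_hasDerivAt key hint]
  have e1 : Real.log (1 - (1/2:ℝ)) = -Real.log 2 := by
    have h : (1 - (1/2:ℝ)) = 2⁻¹ := by norm_num
    rw [h, Real.log_inv]
  have e2 : Real.log (v/(v-1/2)) = Real.log v - Real.log (v-1/2) :=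
    Real.log_div (ne_of_gt hv0) (ne_of_gt hvm)
  rw [hF]
  simp only [e1, e2, Real.log_one, sub_zero]
  field_simp
  ring

lemma rev_at_one :
    ∫ x in (0:ℝ)..(1/2), (x/(1 - x)^2) * (((1:ℝ) - 1/2)/(1 - x)) = 1/4 := by
  set F : ℝ → ℝ := fun x => (1/2 : ℝ) * ((1/2) * (1/(1-x)^2) - 1/(1-x)) with hF
  have key : ∀ x ∈ Set.uIcc (0:ℝ) (1/2),
      HasDerivAt F ((x/(1 - x)^2) * (((1:ℝ) - 1/2)/(1 - x))) x := by
    intro x hx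
    rw [Set.uIcc_of_le (by norm_num)] at hx
    have h1 : (0:ℝ) < 1 - x := by linarith [hx.2]
    have h1' : (1:ℝ) - x ≠ 0 := ne_of_gt h1
    have d1 : HasDerivAt (fun y : ℝ => 1 - y) (-1) x := (hasDerivAt_id x).const_sub 1
    have dsq : HasDerivAt (fun y : ℝ => (1-y)^2) (2*(1-x)^(2-1)*(-1)) x := d1.pow 2
    have dinv2 : HasDerivAt (fun y : ℝ => 1/(1-y)^2)
        ((0 * (1-x)^2 - 1 * (2*(1-x)^(2-1)*(-1)))/((1-x)^2)^2) x :=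
      (hasDerivAt_const x (1:ℝ)).div dsq (pow_ne_zero 2 h1')
    have dinv1 : HasDerivAt (fun y : ℝ => 1/(1-y))
        ((0 * (1-x) - 1 * (-1))/(1-x)^2) x :=
      (hasDerivAt_const x (1:ℝ)).div d1 h1'
    have := ((dinv2.const_mul (1/2:ℝ)).sub dinv1).const_mul (1/2:ℝ)
    refine HasDerivAt.congr_deriv this ?_
    field_simp
    ring
  have hint : IntervalIntegrable (fun x => (x/(1 - x)^2) * (((1:ℝ)-1/2)/(1 - x)))
      volume 0 (1/2) := by
    apply ContinuousOn.intervalIntegrable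
    apply ContinuousOn.mul
    · apply ContinuousOn.div continuousOn_id (by fun_prop)
      intro x hx
      rw [Set.uIcc_of_le (by norm_num)] at hx
      have : (0:ℝ) < 1 - x := by linarith [hx.2]
      positivity
    · apply ContinuousOn.div continuousOn_const (by fun_prop)
      intro x hx
      rw [Set.uIcc_of_le (by norm_num)] at hx
      have : (0:ℝ) < 1 - x := by linarith [hx.2]
      exact ne_of_gt this
  rw [intervalIntegral.integral_eq_sub_of_hasDerivAt key hint, hF]
  norm_num

lemma rev_limit_closed :
    Filter.Tendsto
      (fun v : ℝ => ((v - 1/2)/(v - 1)^2) *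
          (v - 1 - v * Real.log 2 + v * Real.log (v/(v - 1/2))))
      Filter.atTop (nhds (1 - Real.log 2)) := by
  have hsub : Filter.Tendsto (fun v : ℝ => v - 1) Filter.atTop Filter.atTop := by
    simpa [sub_eq_add_neg] using
      Filter.tendsto_atTop_add_const_right Filter.atTop (-1:ℝ) Filter.tendsto_id
  have h0 : Filter.Tendsto (fun v : ℝ => 1/(v-1)) Filter.atTop (nhds 0) :=
    Filter.Tendsto.div_atTop tendsto_const_nhds hsub
  have hA : Filter.Tendsto (fun v : ℝ => (v-1/2)/(v-1)) Filter.atTop (nhds 1) := by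
    have h : Filter.Tendsto (fun v : ℝ => 1 + (1/2)*(1/(v-1))) Filter.atTop
        (nhds (1 + (1/2)*0)) := tendsto_const_nhds.add (tendsto_const_nhds.mul h0)
    rw [show (1:ℝ) + (1/2)*0 = 1 by norm_num] at h
    refine Filter.Tendsto.congr' ?_ h
    filter_upwards [Filter.eventually_gt_atTop (1:ℝ)] with v hv
    have : v - 1 ≠ 0 := by intro h'; nlinarith [hv]
    field_simp
    ring
  have hB : Filter.Tendsto (fun v : ℝ => v/(v-1)) Filter.atTop (nhds 1) := by
    have h : Filter.Tendsto (fun v : ℝ => 1 + 1/(v-1)) Filter.atTop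
        (nhds (1 + 0)) := tendsto_const_nhds.add h0
    rw [show (1:ℝ) + 0 = 1 by norm_num] at h
    refine Filter.Tendsto.congr' ?_ h
    filter_upwards [Filter.eventually_gt_atTop (1:ℝ)] with v hv
    have : v - 1 ≠ 0 := by intro h'; nlinarith [hv]
    field_simp
    ring
  have hC : Filter.Tendsto (fun v : ℝ => (v-1/2)/(v-1)^2) Filter.atTop (nhds 0) := by
    have h : Filter.Tendsto (fun v : ℝ => ((v-1/2)/(v-1)) * (1/(v-1)))
        Filter.atTop (nhds (1*0)) := hA.mul h0
    rw [show (1:ℝ)*0 = 0 by norm_num] at h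
    refine Filter.Tendsto.congr' ?_ h
    filter_upwards [Filter.eventually_gt_atTop (1:ℝ)] with v hv
    rw [div_mul_div_comm, mul_one, sq]
  have hL : Filter.Tendsto (fun v : ℝ => v * Real.log (v/(v-1/2))) Filter.atTop
      (nhds (1/2)) := by
    have h := (Real.tendsto_mul_log_one_add_div_atTop (-(1/2):ℝ)).neg
    rw [show -(-(1/2):ℝ) = 1/2 by norm_num] at h
    refine Filter.Tendsto.congr' ?_ h
    filter_upwards [Filter.eventually_gt_atTop (1:ℝ)] with v hv
    have hv0 : v ≠ 0 := by nlinarith [hv]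
    have hvm : v - 1/2 ≠ 0 := by nlinarith [hv]
    have e1 : 1 + (-(1/2))/v = (v/(v-1/2))⁻¹ := by
      rw [inv_div]; field_simp; ring
    rw [e1, Real.log_inv]
    ring
  have hmain : Filter.Tendsto
      (fun v : ℝ => (v-1/2)/(v-1) - ((v-1/2)/(v-1))*((v/(v-1))*Real.log 2)
        + ((v-1/2)/(v-1)^2)*(v*Real.log (v/(v-1/2))))
      Filter.atTop (nhds (1 - 1*(1*Real.log 2) + 0*(1/2))) :=
    (hA.sub (hA.mul (hB.mul tendsto_const_nhds))).add (hC.mul hL)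
  rw [show (1:ℝ) - 1*(1*Real.log 2) + 0*(1/2) = 1 - Real.log 2 by ring] at hmain
  refine Filter.Tendsto.congr' ?_ hmain
  filter_upwards [Filter.eventually_gt_atTop (1:ℝ)] with v hv
  have : v - 1 ≠ 0 := by intro h'; nlinarith [hv]
  field_simp

/-- The expected revenue from the OR player in the equilibrium
`(μ*, ν*)`: closed form for `v ≠ 1`, value `1/4` at `v = 1`, and limit `1 - ln 2`
as `v → ∞`. -/
theorem revenue_from_or :
    (∀ v : ℝ, 1/2 < v → v ≠ 1 →
      ∫ x in (0:ℝ)..(1/2), (x/(1 - x)^2) * ((v - 1/2)/(v - x)) =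
        ((v - 1/2)/(v - 1)^2) *
          (v - 1 - v * Real.log 2 + v * Real.log (v/(v - 1/2)))) ∧
    (∫ x in (0:ℝ)..(1/2), (x/(1 - x)^2) * (((1:ℝ) - 1/2)/(1 - x)) = 1/4) ∧
    Filter.Tendsto
      (fun v : ℝ => ∫ x in (0:ℝ)..(1/2), (x/(1 - x)^2) * ((v - 1/2)/(v - x)))
      Filter.atTop (nhds (1 - Real.log 2)) := by
  refine ⟨rev_closed_form, rev_at_one, ?_⟩
  refine Filter.Tendsto.congr' ?_ rev_limit_closed
  filter_upwards [Filter.eventually_gt_atTop (1:ℝ)] with v hv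
  exact (rev_closed_form v (by linarith) (ne_of_gt hv)).symm
end
end
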